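/- arXiv:1805.06791 — 4 statements merged into one kernel-verified Lean document; each statement's English description precedes it below -/
import Mathlib

section
/- Let m ≥ 1 and let z = (x,y) ∈ ℝ² with z ≠ 0, and let γ = (z(s), τ(s)) : [0,T] → ℝ³ be an absolutely continuous horizontal curve for the vector fields X = ∂_x + |z|^{2m} y ∂_t and Y = ∂_y − |z|^{2m} x ∂_t with |ż(s)| ≤ 1 a.e., starting at (x₀, 0, 0) with x₀ ≥ 0. Then there is a constant C > 0 depending only on m such that for all s ∈ [0,T], |z(s)|^{2m}|y(s)| + |x₀^{2m+1} − |z(s)|^{2m} x(s)| ≤ C (x₀^{2m} s + s^{2m+1}). -/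
open MeasureTheory Set

noncomputable section

/-- Euclidean norm on ℝ². -/
def nrm (z : ℝ × ℝ) : ℝ := Real.sqrt (z.1 ^ 2 + z.2 ^ 2)

/-- `|z|^(2m)` for a real parameter `m`. -/
def w2m (m : ℝ) (z : ℝ × ℝ) : ℝ := (z.1 ^ 2 + z.2 ^ 2) ^ m

/-- The vector field `X = ∂ₓ + |z|^(2m) y ∂_t` on ℝ³. -/
def Xvf (m : ℝ) (p : ℝ × ℝ × ℝ) : ℝ × ℝ × ℝ := (1, 0, w2m m (p.1, p.2.1) * p.2.1)

/-- The vector field `Y = ∂_y − |z|^(2m) x ∂_t` on ℝ³. -/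
def Yvf (m : ℝ) (p : ℝ × ℝ × ℝ) : ℝ × ℝ × ℝ := (0, 1, -(w2m m (p.1, p.2.1) * p.1))

/-- `γ` is an (absolutely continuous) horizontal curve on `[0, T]` with controls `α, β`. -/
def IsHorizontal (m : ℝ) (γ : ℝ → ℝ × ℝ × ℝ) (α β : ℝ → ℝ) (T : ℝ) : Prop :=
  ∀ t ∈ Icc (0 : ℝ) T,
    γ t = γ 0 + ∫ s in (0 : ℝ)..t, (α s • Xvf m (γ s) + β s • Yvf m (γ s))

/-- Length of a horizontal curve with controls `α, β` on `[0, T]`. -/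
def ccLength (α β : ℝ → ℝ) (T : ℝ) : ℝ := ∫ s in (0 : ℝ)..T, Real.sqrt (α s ^ 2 + β s ^ 2)

/-- The Carnot–Carathéodory distance associated with `X` and `Y`. -/
def ccDist (m : ℝ) (p q : ℝ × ℝ × ℝ) : ℝ :=
  sInf { L : ℝ | ∃ T, 0 ≤ T ∧ ∃ γ α β, IsHorizontal m γ α β T ∧
    γ 0 = p ∧ γ T = q ∧ L = ccLength α β T }

/-- MVT bound for `t ↦ t ^ m` on `[0, M]`. -/
lemma rpow_diff_le {m M u v : ℝ} (hm : 1 ≤ m) (hu : 0 ≤ u) (hv : 0 ≤ v)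
    (huM : u ≤ M) (hvM : v ≤ M) :
    |u ^ m - v ^ m| ≤ m * M ^ (m - 1) * |u - v| := by
  have hM0 : 0 ≤ M := hu.trans huM
  have h := Convex.norm_image_sub_le_of_norm_hasDerivWithin_le
    (f := fun t : ℝ => t ^ m) (f' := fun t : ℝ => m * t ^ (m - 1)) (s := Icc (0:ℝ) M)
    (C := m * M ^ (m - 1))
    (fun t _ => (Real.hasDerivAt_rpow_const (Or.inr hm)).hasDerivWithinAt)
    (fun t ht => ?_) (convex_Icc 0 M) ⟨hv, hvM⟩ ⟨hu, huM⟩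
  · simpa [Real.norm_eq_abs] using h
  · have ht0 : 0 ≤ t := ht.1
    have h1 : (0:ℝ) ≤ t ^ (m - 1) := Real.rpow_nonneg ht0 _
    have hm0 : (0:ℝ) ≤ m := by linarith
    rw [Real.norm_eq_abs, abs_of_nonneg (mul_nonneg hm0 h1)]
    exact mul_le_mul_of_nonneg_left (Real.rpow_le_rpow ht0 ht.2 (by linarith)) hm0

/-- Component bounds for horizontal curves with controls of norm at most 1. -/
lemma comp_bound {m T x₀ : ℝ} {γ : ℝ → ℝ × ℝ × ℝ} {α β : ℝ → ℝ}
    (hhor : IsHorizontal m γ α β T) (h0 : γ 0 = (x₀, 0, 0))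
    (hctrl : ∀ s ∈ Icc (0:ℝ) T, α s ^ 2 + β s ^ 2 ≤ 1)
    {s : ℝ} (hs : s ∈ Icc (0:ℝ) T) :
    |(γ s).1 - x₀| ≤ s ∧ |(γ s).2.1| ≤ s := by
  have hs0 : (0:ℝ) ≤ s := hs.1
  set f : ℝ → ℝ × ℝ × ℝ := fun u => α u • Xvf m (γ u) + β u • Yvf m (γ u) with hfdef
  have heq := hhor s hs
  rw [h0] at heq
  by_cases hf : IntervalIntegrable f volume 0 s
  · have hsub : ∀ u ∈ Set.uIoc (0:ℝ) s, u ∈ Icc (0:ℝ) T := by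
      intro u hu
      rw [uIoc_of_le hs0] at hu
      exact ⟨le_of_lt hu.1, hu.2.trans hs.2⟩
    have hα : ∀ u ∈ Set.uIoc (0:ℝ) s, ‖α u‖ ≤ 1 := by
      intro u hu
      have h := hctrl u (hsub u hu)
      have : α u ^ 2 ≤ 1 := by nlinarith [sq_nonneg (β u)]
      simpa [Real.norm_eq_abs] using (sq_le_one_iff_abs_le_one (α u)).1 this
    have hβ : ∀ u ∈ Set.uIoc (0:ℝ) s, ‖β u‖ ≤ 1 := by
      intro u hu
      have h := hctrl u (hsub u hu)
      have : β u ^ 2 ≤ 1 := by nlinarith [sq_nonneg (α u)]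
      simpa [Real.norm_eq_abs] using (sq_le_one_iff_abs_le_one (β u)).1 this
    have hfst : (∫ u in (0:ℝ)..s, f u).1 = ∫ u in (0:ℝ)..s, α u := by
      have h := (ContinuousLinearMap.fst ℝ ℝ (ℝ × ℝ)).intervalIntegral_comp_comm hf
      simp only [ContinuousLinearMap.coe_fst'] at h
      rw [← h]
      apply intervalIntegral.integral_congr
      intro u _
      simp [hfdef, Xvf, Yvf]
    have hsnd : (∫ u in (0:ℝ)..s, f u).2.1 = ∫ u in (0:ℝ)..s, β u := by
      have h := ((ContinuousLinearMap.fst ℝ ℝ ℝ).comp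
        (ContinuousLinearMap.snd ℝ ℝ (ℝ × ℝ))).intervalIntegral_comp_comm hf
      simp only [ContinuousLinearMap.coe_comp', Function.comp_apply,
        ContinuousLinearMap.coe_fst', ContinuousLinearMap.coe_snd'] at h
      rw [← h]
      apply intervalIntegral.integral_congr
      intro u _
      simp [hfdef, Xvf, Yvf]
    have h1 : (γ s).1 - x₀ = ∫ u in (0:ℝ)..s, α u := by
      have := congrArg Prod.fst heq
      simp only [Prod.fst_add] at this
      rw [this, hfst]; ring
    have h2 : (γ s).2.1 = ∫ u in (0:ℝ)..s, β u := by
      have := congrArg (fun p : ℝ × ℝ × ℝ => p.2.1) heq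
      simp only [Prod.snd_add, Prod.fst_add] at this
      rw [this, hsnd]; simp
    constructor
    · rw [h1]
      have := intervalIntegral.norm_integral_le_of_norm_le_const hα
      simpa [Real.norm_eq_abs, abs_of_nonneg hs0] using this
    · rw [h2]
      have := intervalIntegral.norm_integral_le_of_norm_le_const hβ
      simpa [Real.norm_eq_abs, abs_of_nonneg hs0] using this
  · rw [intervalIntegral.integral_undef hf] at heq
    simp only [add_zero] at heq
    rw [heq]
    simpa using hs0

set_option maxHeartbeats 2000000 in
/-- A priori estimate along horizontal curves with `|ż| ≤ 1` starting at `(x₀,0,0)`: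
`|z(s)|^(2m)|y(s)| + |x₀^(2m+1) − |z(s)|^(2m) x(s)| ≤ C (x₀^(2m) s + s^(2m+1))`. -/
theorem stmt2 (m : ℝ) (hm : 1 ≤ m) :
    ∃ C : ℝ, 0 < C ∧ ∀ (x₀ T : ℝ) (γ : ℝ → ℝ × ℝ × ℝ) (α β : ℝ → ℝ),
      0 ≤ x₀ → 0 ≤ T →
      IsHorizontal m γ α β T →
      γ 0 = (x₀, 0, 0) →
      (∀ s ∈ Icc (0 : ℝ) T, α s ^ 2 + β s ^ 2 ≤ 1) →
      ∀ s ∈ Icc (0 : ℝ) T,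
        w2m m ((γ s).1, (γ s).2.1) * |(γ s).2.1| +
          |x₀ ^ (2 * m + 1) - w2m m ((γ s).1, (γ s).2.1) * (γ s).1| ≤
        C * (x₀ ^ (2 * m) * s + s ^ (2 * m + 1)) := by
  have h3 : (0:ℝ) < (3:ℝ) ^ (2 * m) := Real.rpow_pos_of_pos (by norm_num) _
  refine ⟨(4 * m + 2) * (3:ℝ) ^ (2 * m), mul_pos (by linarith) h3, ?_⟩
  intro x₀ T γ α β hx₀ hT hhor h0 hctrl s hs
  obtain ⟨hxb, hyb⟩ := comp_bound hhor h0 hctrl hs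
  have hs0 : (0:ℝ) ≤ s := hs.1
  set a := (γ s).1 with ha
  set b := (γ s).2.1 with hb
  set u := a ^ 2 + b ^ 2 with hu
  have hu0 : (0:ℝ) ≤ u := by positivity
  have hxd := abs_le.1 hxb
  have hbd := abs_le.1 hyb
  set M : ℝ := (x₀ + 2 * s) ^ 2 with hM
  have hM0 : (0:ℝ) ≤ M := sq_nonneg _
  have hx2s : (0:ℝ) ≤ x₀ + 2 * s := by linarith
  have huM : u ≤ M := by nlinarith [sq_nonneg (a - x₀ - s), sq_nonneg (b - s), sq_nonneg (b + s), mul_nonneg hx₀ hs0]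
  have hvM : x₀ ^ 2 ≤ M := by nlinarith [mul_nonneg hx₀ hs0, sq_nonneg s]
  have hxsM : x₀ * s ≤ M := by nlinarith [mul_nonneg hx₀ hs0, sq_nonneg s, sq_nonneg x₀]
  have hdiff : |u - x₀ ^ 2| ≤ 2 * x₀ * s + 2 * s ^ 2 := by
    have h1 : (a - x₀) ^ 2 ≤ s ^ 2 := sq_le_sq' (by linarith) (by linarith)
    have h2 : b ^ 2 ≤ s ^ 2 := sq_le_sq' (by linarith) (by linarith)
    rw [abs_le]
    constructor <;> nlinarith [mul_nonneg hx₀ hs0, sq_nonneg (a - x₀)]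
  -- rpow facts
  have hw : w2m m (a, b) = u ^ m := rfl
  have hW0 : (0:ℝ) ≤ u ^ m := Real.rpow_nonneg hu0 _
  have hK0 : (0:ℝ) ≤ (x₀ ^ 2) ^ m := Real.rpow_nonneg (sq_nonneg _) _
  have hP0 : (0:ℝ) ≤ M ^ (m - 1) := Real.rpow_nonneg hM0 _
  have hQ0 : (0:ℝ) ≤ M ^ m := Real.rpow_nonneg hM0 _
  have hWQ : u ^ m ≤ M ^ m := Real.rpow_le_rpow hu0 huM (by linarith)
  have hPQ : M ^ (m - 1) * M = M ^ m := by
    have hne : m - 1 + 1 ≠ 0 := by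
      have : m - 1 + 1 = m := by ring
      rw [this]; exact (by linarith : (0:ℝ) < m).ne'
    have h := Real.rpow_add' (x := M) hM0 hne
    rw [Real.rpow_one] at h
    have hmm : m - 1 + 1 = m := by ring
    rw [hmm] at h
    exact h.symm
  have hx0pow : x₀ ^ (2 * m + 1) = (x₀ ^ 2) ^ m * x₀ := by
    have hne : 2 * m + 1 ≠ 0 := (by linarith : (0:ℝ) < 2 * m + 1).ne'
    rw [Real.rpow_add' hx₀ hne, Real.rpow_one, ← Real.rpow_natCast x₀ 2,
      ← Real.rpow_mul hx₀]
    norm_num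
  have hM2m : M ^ m = (x₀ + 2 * s) ^ (2 * m) := by
    rw [hM, ← Real.rpow_natCast (x₀ + 2 * s) 2, ← Real.rpow_mul hx2s]
    norm_num
  have hdm : |u ^ m - (x₀ ^ 2) ^ m| ≤ m * M ^ (m - 1) * (2 * x₀ * s + 2 * s ^ 2) := by
    refine (rpow_diff_le hm hu0 (sq_nonneg x₀) huM hvM).trans ?_
    exact mul_le_mul_of_nonneg_left hdiff (mul_nonneg (by linarith) hP0)
  -- main bound: LHS ≤ (4m+2) * M^m * s
  have h2m : x₀ * (m * M ^ (m - 1) * (2 * x₀ * s + 2 * s ^ 2)) ≤ 4 * m * (M ^ m * s) := by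
    have key : x₀ * (2 * x₀ * s + 2 * s ^ 2) ≤ 4 * (M * s) := by
      nlinarith [mul_nonneg (mul_nonneg hx₀ hx₀) hs0, mul_nonneg (mul_nonneg hx₀ hs0) hs0]
    calc x₀ * (m * M ^ (m - 1) * (2 * x₀ * s + 2 * s ^ 2))
        = m * (M ^ (m - 1) * (x₀ * (2 * x₀ * s + 2 * s ^ 2))) := by ring
      _ ≤ m * (M ^ (m - 1) * (4 * (M * s))) := by
          apply mul_le_mul_of_nonneg_left (mul_le_mul_of_nonneg_left key hP0) (by linarith)
      _ = 4 * m * (M ^ (m - 1) * M * s) := by ring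
      _ = 4 * m * (M ^ m * s) := by rw [hPQ]
  have habs : |x₀ ^ (2 * m + 1) - u ^ m * a| ≤ (4 * m + 1) * (M ^ m * s) := by
    rw [hx0pow]
    calc |(x₀ ^ 2) ^ m * x₀ - u ^ m * a|
        ≤ |(x₀ ^ 2) ^ m * x₀ - u ^ m * x₀| + |u ^ m * x₀ - u ^ m * a| := abs_sub_le _ _ _
      _ = |(x₀ ^ 2) ^ m - u ^ m| * x₀ + u ^ m * |x₀ - a| := by
          rw [← sub_mul, ← mul_sub, abs_mul, abs_mul, abs_of_nonneg hx₀, abs_of_nonneg hW0]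
      _ ≤ m * M ^ (m - 1) * (2 * x₀ * s + 2 * s ^ 2) * x₀ + M ^ m * s := by
          have e1 : |(x₀ ^ 2) ^ m - u ^ m| = |u ^ m - (x₀ ^ 2) ^ m| := abs_sub_comm _ _
          have e2 : |x₀ - a| = |a - x₀| := abs_sub_comm _ _
          have t1 := mul_le_mul_of_nonneg_right (e1 ▸ hdm) hx₀
          have t2 : u ^ m * |x₀ - a| ≤ M ^ m * s := by
            rw [e2]
            exact mul_le_mul hWQ hxb (abs_nonneg _) hQ0
          linarith
      _ ≤ 4 * m * (M ^ m * s) + M ^ m * s := by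
          have := h2m; linarith [h2m]
      _ = (4 * m + 1) * (M ^ m * s) := by ring
  have hterm1 : u ^ m * |b| ≤ M ^ m * s := mul_le_mul hWQ hyb (abs_nonneg _) hQ0
  have hMain : u ^ m * |b| + |x₀ ^ (2 * m + 1) - u ^ m * a| ≤ (4 * m + 2) * (M ^ m * s) := by
    have := habs; nlinarith [hterm1]
  -- bound M^m * s by 3^(2m) * (x₀^(2m) s + s^(2m+1))
  have hA0 : (0:ℝ) ≤ x₀ ^ (2 * m) := Real.rpow_nonneg hx₀ _
  have hB0 : (0:ℝ) ≤ s ^ (2 * m + 1) := Real.rpow_nonneg hs0 _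
  have hQs : M ^ m * s ≤ (3:ℝ) ^ (2 * m) * (x₀ ^ (2 * m) * s + s ^ (2 * m + 1)) := by
    rcases le_total s x₀ with hc | hc
    · have h1 : (x₀ + 2 * s) ^ (2 * m) ≤ (3 * x₀) ^ (2 * m) :=
        Real.rpow_le_rpow hx2s (by linarith) (by linarith)
      have h2 : ((3:ℝ) * x₀) ^ (2 * m) = (3:ℝ) ^ (2 * m) * x₀ ^ (2 * m) :=
        Real.mul_rpow (by norm_num) hx₀
      rw [hM2m]
      calc (x₀ + 2 * s) ^ (2 * m) * s ≤ (3:ℝ) ^ (2 * m) * x₀ ^ (2 * m) * s := by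
            rw [← h2]; exact mul_le_mul_of_nonneg_right h1 hs0
        _ ≤ (3:ℝ) ^ (2 * m) * (x₀ ^ (2 * m) * s + s ^ (2 * m + 1)) := by
            nlinarith [mul_nonneg (le_of_lt h3) hB0]
    · have h1 : (x₀ + 2 * s) ^ (2 * m) ≤ (3 * s) ^ (2 * m) :=
        Real.rpow_le_rpow hx2s (by linarith) (by linarith)
      have h2 : ((3:ℝ) * s) ^ (2 * m) = (3:ℝ) ^ (2 * m) * s ^ (2 * m) :=
        Real.mul_rpow (by norm_num) hs0
      have h4 : s ^ (2 * m) * s = s ^ (2 * m + 1) := by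
        have hne : 2 * m + 1 ≠ 0 := (by linarith : (0:ℝ) < 2 * m + 1).ne'
        rw [Real.rpow_add' hs0 hne, Real.rpow_one]
      rw [hM2m]
      calc (x₀ + 2 * s) ^ (2 * m) * s ≤ (3:ℝ) ^ (2 * m) * s ^ (2 * m) * s := by
            rw [← h2]; exact mul_le_mul_of_nonneg_right h1 hs0
        _ = (3:ℝ) ^ (2 * m) * s ^ (2 * m + 1) := by rw [mul_assoc, h4]
        _ ≤ (3:ℝ) ^ (2 * m) * (x₀ ^ (2 * m) * s + s ^ (2 * m + 1)) := by
            nlinarith [mul_nonneg (le_of_lt h3) (mul_nonneg hA0 hs0)]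
  rw [hw]
  calc u ^ m * |b| + |x₀ ^ (2 * m + 1) - u ^ m * a|
      ≤ (4 * m + 2) * (M ^ m * s) := hMain
    _ ≤ (4 * m + 2) * ((3:ℝ) ^ (2 * m) * (x₀ ^ (2 * m) * s + s ^ (2 * m + 1))) :=
        mul_le_mul_of_nonneg_left hQs (by linarith)
    _ = (4 * m + 2) * (3:ℝ) ^ (2 * m) * (x₀ ^ (2 * m) * s + s ^ (2 * m + 1)) := by ring
end
end

section
/- Let m ≥ 1, x₀ ≥ 0, and let γ be a unit-speed horizontal curve of length T for X = ∂_x + |z|^{2m} y ∂_t, Y = ∂_y − |z|^{2m} x ∂_t, joining (x₀, 0, 0) to (ξ, η, τ). Then there is C > 0 depending only on m such that T ≥ C^{-1} min{ |τ + x₀^{2m+1} η|^{1/2} / x₀^m, |τ + x₀^{2m+1} η|^{1/(2m+2)} }. -/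
open MeasureTheory Set

noncomputable section

lemma mvt_rpow {m : ℝ} (hm : 1 ≤ m) {a b : ℝ} (ha : 0 ≤ a) (hab : a ≤ b) :
    b ^ m - a ^ m ≤ m * b ^ (m - 1) * (b - a) := by
  rcases eq_or_lt_of_le (ha.trans hab) with hb | hb
  · have : a = 0 := le_antisymm (hab.trans hb.symm.le) ha
    simp [← hb, this]
  · have hbne : b ≠ 0 := hb.ne'
    have hs : (-1 : ℝ) ≤ a / b - 1 := by
      have : 0 ≤ a / b := div_nonneg ha hb.le
      linarith
    have hber := one_add_mul_self_le_rpow_one_add hs hm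
    rw [add_sub_cancel] at hber
    have hdiv : (a / b) ^ m = a ^ m / b ^ m := Real.div_rpow ha hb.le m
    rw [hdiv] at hber
    have hbm : (0:ℝ) < b ^ m := Real.rpow_pos_of_pos hb m
    have hber' : (1 + m * (a / b - 1)) * b ^ m ≤ a ^ m := (le_div_iff₀ hbm).mp hber
    have hpow : b ^ (m - 1) * b = b ^ m := by
      rw [← Real.rpow_add_one hbne (m-1)]; ring_nf
    rw [← hpow] at hber' ⊢
    have hd2 : a / b * (b ^ (m - 1) * b) = a * b ^ (m - 1) := by field_simp
    nlinarith [hber', hd2]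

lemma mvt_abs {m : ℝ} (hm : 1 ≤ m) {u v M : ℝ} (hu : 0 ≤ u) (hv : 0 ≤ v)
    (huM : u ≤ M) (hvM : v ≤ M) :
    |u ^ m - v ^ m| ≤ m * M ^ (m - 1) * |u - v| := by
  have hm0 : (0:ℝ) ≤ m := by linarith
  have key : ∀ a b : ℝ, 0 ≤ a → a ≤ b → b ≤ M → b ^ m - a ^ m ≤ m * M ^ (m-1) * (b - a) := by
    intro a b ha hab hbM
    have h1 := mvt_rpow hm ha hab
    have h2 : b ^ (m-1) ≤ M ^ (m-1) := Real.rpow_le_rpow (ha.trans hab) hbM (by linarith)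
    nlinarith [mul_nonneg (mul_nonneg hm0 (sub_nonneg.2 hab)) (sub_nonneg.2 h2)]
  rcases le_total u v with h' | h'
  · rw [abs_sub_comm, abs_of_nonneg (sub_nonneg.2 (Real.rpow_le_rpow hu h' hm0)),
      abs_sub_comm, abs_of_nonneg (sub_nonneg.2 h')]
    exact key u v hu h' hvM
  · rw [abs_of_nonneg (sub_nonneg.2 (Real.rpow_le_rpow hv h' hm0)),
      abs_of_nonneg (sub_nonneg.2 h')]
    exact key v u hv h' huM

set_option maxHeartbeats 1000000 in
lemma key_bound (m : ℝ) (hm : 1 ≤ m) (x₀ T ξ η τ : ℝ) (γ : ℝ → ℝ × ℝ × ℝ) (α β : ℝ → ℝ)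
    (hx₀ : 0 ≤ x₀) (hT : 0 ≤ T)
    (hhor : IsHorizontal m γ α β T) (h0 : γ 0 = (x₀, 0, 0)) (hTv : γ T = (ξ, η, τ))
    (hunit : ∀ s ∈ Icc (0:ℝ) T, α s ^ 2 + β s ^ 2 = 1) :
    |τ + x₀ ^ (2*m+1) * η| ≤ (3*m+2) * 2^m * (x₀+T)^(2*m) * T^2 := by
  have hm0 : (0:ℝ) ≤ m := by linarith
  have hR0 : (0:ℝ) ≤ x₀ + T := by linarith
  have hRHS : (0:ℝ) ≤ (3*m+2) * 2^m * (x₀+T)^(2*m) * T^2 := by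
    have := Real.rpow_nonneg hR0 (2*m)
    have h2 : (0:ℝ) ≤ (2:ℝ)^m := Real.rpow_nonneg (by norm_num) m
    positivity
  -- trivial case: γ T = γ 0
  have htriv : γ T = γ 0 → |τ + x₀ ^ (2*m+1) * η| ≤ (3*m+2) * 2^m * (x₀+T)^(2*m) * T^2 := by
    intro h
    rw [h0, hTv] at h
    simp only [Prod.mk.injEq] at h
    obtain ⟨-, hη, hτ⟩ := h
    simp only [hη, hτ, mul_zero, add_zero, abs_zero]
    exact hRHS
  set f : ℝ → ℝ × ℝ × ℝ := fun s => α s • Xvf m (γ s) + β s • Yvf m (γ s) with hf_def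
  rcases eq_or_lt_of_le hT with hT0 | hTpos
  · exact htriv (by rw [← hT0])
  by_cases hfi : IntervalIntegrable f volume 0 T
  swap
  · apply htriv
    have h := hhor T ⟨hT, le_rfl⟩
    rw [intervalIntegral.integral_undef hfi, add_zero] at h
    exact h
  -- projection identity
  have hcomp : ∀ (L : (ℝ×ℝ×ℝ) →L[ℝ] ℝ), ∀ t ∈ Icc (0:ℝ) T,
      L (γ t) = L (γ 0) + ∫ s in (0:ℝ)..t, L (f s) := by
    intro L t ht
    have hsub : uIcc (0:ℝ) t ⊆ uIcc (0:ℝ) T := by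
      rw [uIcc_of_le ht.1, uIcc_of_le hT]; exact Icc_subset_Icc le_rfl ht.2
    rw [hhor t ht, map_add, L.intervalIntegral_comp_comm (hfi.mono_set hsub)]
  have hα1 : ∀ s ∈ Icc (0:ℝ) T, |α s| ≤ 1 := by
    intro s hs; have := hunit s hs
    rw [abs_le]; constructor <;> nlinarith [sq_nonneg (α s), sq_nonneg (β s)]
  have hβ1 : ∀ s ∈ Icc (0:ℝ) T, |β s| ≤ 1 := by
    intro s hs; have := hunit s hs
    rw [abs_le]; constructor <;> nlinarith [sq_nonneg (α s), sq_nonneg (β s)]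
  set L1 : (ℝ×ℝ×ℝ) →L[ℝ] ℝ := ContinuousLinearMap.fst ℝ ℝ (ℝ×ℝ) with hL1
  set L2 : (ℝ×ℝ×ℝ) →L[ℝ] ℝ :=
    (ContinuousLinearMap.fst ℝ ℝ ℝ).comp (ContinuousLinearMap.snd ℝ ℝ (ℝ×ℝ)) with hL2
  set L3 : (ℝ×ℝ×ℝ) →L[ℝ] ℝ :=
    (ContinuousLinearMap.snd ℝ ℝ ℝ).comp (ContinuousLinearMap.snd ℝ ℝ (ℝ×ℝ)) with hL3
  have hL1f : ∀ s, L1 (f s) = α s := by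
    intro s; simp [hL1, hf_def, Xvf, Yvf]
  have hL2f : ∀ s, L2 (f s) = β s := by
    intro s; simp [hL2, hf_def, Xvf, Yvf]
  have hL3f : ∀ s, L3 (f s) =
      α s * (w2m m ((γ s).1, (γ s).2.1) * (γ s).2.1)
      - β s * (w2m m ((γ s).1, (γ s).2.1) * (γ s).1) := by
    intro s; simp [hL3, hf_def, Xvf, Yvf]; ring
  -- coordinate bounds
  have hx : ∀ t ∈ Icc (0:ℝ) T, |(γ t).1 - x₀| ≤ t := by
    intro t ht
    have h := hcomp L1 t ht
    simp only [hL1f] at h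
    have h1 : (γ t).1 = x₀ + ∫ s in (0:ℝ)..t, α s := by
      simpa [hL1, h0] using h
    rw [h1, add_sub_cancel_left]
    have hb := intervalIntegral.norm_integral_le_of_norm_le_const (C := 1)
      (f := α) (a := 0) (b := t) ?_
    · simpa [abs_of_nonneg ht.1] using hb
    · intro s hs
      rw [uIoc_of_le ht.1] at hs
      exact (hα1 s ⟨hs.1.le, hs.2.trans ht.2⟩).trans (le_refl 1) |>.trans_eq (by norm_num)
  have hy : ∀ t ∈ Icc (0:ℝ) T, |(γ t).2.1| ≤ t := by
    intro t ht
    have h := hcomp L2 t ht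
    simp only [hL2f] at h
    have h1 : (γ t).2.1 = 0 + ∫ s in (0:ℝ)..t, β s := by
      simpa [hL2, h0] using h
    rw [h1, zero_add]
    have hb := intervalIntegral.norm_integral_le_of_norm_le_const (C := 1)
      (f := β) (a := 0) (b := t) ?_
    · simpa [abs_of_nonneg ht.1] using hb
    · intro s hs
      rw [uIoc_of_le ht.1] at hs
      exact hβ1 s ⟨hs.1.le, hs.2.trans ht.2⟩
  -- the functional L v = c * v.2.1 + v.2.2
  set c := x₀ ^ (2*m+1) with hc
  set L : (ℝ×ℝ×ℝ) →L[ℝ] ℝ := c • L2 + L3 with hLdef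
  have hLapp : ∀ v : ℝ×ℝ×ℝ, L v = c * v.2.1 + v.2.2 := by
    intro v; simp [hLdef, hL2, hL3]
  have hf21 : ∀ s, (f s).2.1 = β s := by
    intro s; simp [hf_def, Xvf, Yvf]
  have hf22 : ∀ s, (f s).2.2 =
      α s * (w2m m ((γ s).1, (γ s).2.1) * (γ s).2.1)
      - β s * (w2m m ((γ s).1, (γ s).2.1) * (γ s).1) := by
    intro s; simp [hf_def, Xvf, Yvf]; ring
  have h := hcomp L T ⟨hT, le_rfl⟩
  rw [hLapp, hLapp, h0, hTv] at h
  norm_num at h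
  set R := x₀ + T with hR
  have hRpos : 0 < R := by rw [hR]; linarith
  have h2m : (1:ℝ) ≤ 2^m := by
    calc (1:ℝ) = 2^(0:ℝ) := by norm_num
    _ ≤ 2^m := Real.rpow_le_rpow_of_exponent_le one_le_two hm0
  have hRsq : ((R:ℝ)^2)^m = R^(2*m) := by
    rw [← Real.rpow_natCast R 2, ← Real.rpow_mul hRpos.le]; norm_num
  have hbound : ∀ s ∈ Set.uIoc (0:ℝ) T, ‖L (f s)‖ ≤ (3*m+2) * 2^m * R^(2*m) * T := by
    intro s hs
    rw [uIoc_of_le hT] at hs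
    have hsIcc : s ∈ Icc (0:ℝ) T := ⟨hs.1.le, hs.2⟩
    set x := (γ s).1 with hxdef
    set y := (γ s).2.1 with hydef
    set w := w2m m (x, y) with hwdef
    have hxs : |x - x₀| ≤ T := (hx s hsIcc).trans hs.2
    have hys : |y| ≤ T := (hy s hsIcc).trans hs.2
    have hxR : |x| ≤ R := by
      calc |x| = |(x - x₀) + x₀| := by ring_nf
      _ ≤ |x - x₀| + |x₀| := abs_add_le _ _
      _ ≤ T + x₀ := by rw [abs_of_nonneg hx₀]; linarith
      _ = R := by rw [hR]; ring
    have hyR : |y| ≤ R := hys.trans (by rw [hR]; linarith)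
    have hzz : x^2 + y^2 ≤ 2*R^2 := by
      have h1 : x^2 ≤ R^2 := sq_le_sq' (by linarith [(abs_le.mp hxR).1]) (abs_le.mp hxR).2
      have h2 : y^2 ≤ R^2 := sq_le_sq' (by linarith [(abs_le.mp hyR).1]) (abs_le.mp hyR).2
      linarith
    have hzz0 : (0:ℝ) ≤ x^2 + y^2 := by positivity
    have hwval : w = (x^2+y^2)^m := by rw [hwdef]; simp [w2m]
    have hw0 : 0 ≤ w := by rw [hwval]; exact Real.rpow_nonneg hzz0 m
    have hwle : w ≤ 2^m * R^(2*m) := by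
      rw [hwval]
      calc (x^2+y^2)^m ≤ (2*R^2)^m := Real.rpow_le_rpow hzz0 hzz hm0
      _ = 2^m * (R^2)^m := Real.mul_rpow (by norm_num) (by positivity)
      _ = 2^m * R^(2*m) := by rw [hRsq]
    have hx0R : x₀ ≤ R := by rw [hR]; linarith
    have hx0sq : (x₀^2)^m = x₀^(2*m) := by
      rw [← Real.rpow_natCast x₀ 2, ← Real.rpow_mul hx₀]; norm_num
    have hx0le : x₀^(2*m) ≤ R^(2*m) := Real.rpow_le_rpow hx₀ hx0R (by linarith)
    -- |x₀^(2m) - w| bound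
    have habs : |x₀^2 - (x^2+y^2)| ≤ 3*T*R := by
      have e : x₀^2 - (x^2+y^2) = (x₀-x)*(x₀+x) - y*y := by ring
      have h1 : |(x₀-x)*(x₀+x)| ≤ T*(2*R) := by
        rw [abs_mul]
        apply mul_le_mul (by rwa [abs_sub_comm]) _ (abs_nonneg _) hT
        calc |x₀+x| ≤ |x₀| + |x| := abs_add_le _ _
        _ ≤ 2*R := by rw [abs_of_nonneg hx₀]; linarith
      have h2 : |y*y| ≤ T*R := by
        rw [abs_mul]; exact mul_le_mul hys hyR (abs_nonneg _) hT
      rw [e]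
      calc |(x₀-x)*(x₀+x) - y*y| ≤ |(x₀-x)*(x₀+x)| + |y*y| := abs_sub _ _
      _ ≤ 3*T*R := by linarith
    have hexp1 : (2*R^2 : ℝ)^(m-1) ≤ 2^m * R^(2*m-2) := by
      rw [Real.mul_rpow (by norm_num) (by positivity)]
      have e1 : ((R:ℝ)^2)^(m-1) = R^(2*(m-1)) := by
        rw [← Real.rpow_natCast R 2, ← Real.rpow_mul hRpos.le]; norm_num
      rw [e1]
      have : (2:ℝ)^(m-1) ≤ 2^m := Real.rpow_le_rpow_of_exponent_le one_le_two (by linarith)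
      have h2 : ((R:ℝ))^(2*(m-1)) = R^(2*m-2) := by ring_nf
      rw [h2]
      exact mul_le_mul_of_nonneg_right this (Real.rpow_nonneg hRpos.le _)
    have hx0zz : x₀^2 ≤ 2*R^2 := by
      have h1 : x₀^2 ≤ R^2 := sq_le_sq' (by linarith) hx0R
      have h2 : (0:ℝ) ≤ R^2 := sq_nonneg R
      linarith
    have hdiff : |x₀^(2*m) - w| ≤ 3*m*2^m*T*R^(2*m-1) := by
      rw [← hx0sq, hwval]
      calc |(x₀^2)^m - (x^2+y^2)^m| ≤ m * (2*R^2)^(m-1) * |x₀^2 - (x^2+y^2)| :=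
        mvt_abs hm (sq_nonneg x₀) hzz0 hx0zz hzz
      _ ≤ m * (2^m * R^(2*m-2)) * (3*T*R) := by
        gcongr
      _ = 3*m*2^m*T*(R^(2*m-2)*R) := by ring
      _ = 3*m*2^m*T*R^(2*m-1) := by
        rw [← Real.rpow_add_one hRpos.ne' (2*m-2)]; ring_nf
    have hcval : c = x₀^(2*m) * x₀ := by
      rw [hc, Real.rpow_add' hx₀ (by linarith : (0:ℝ) < 2*m+1).ne', Real.rpow_one]
    have hcw : |c - w*x| ≤ R^(2*m)*T + 3*m*2^m*T*R^(2*m) := by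
      have e : c - w*x = x₀^(2*m)*(x₀ - x) + (x₀^(2*m) - w)*x := by rw [hcval]; ring
      rw [e]
      have h1 : |x₀^(2*m)*(x₀-x)| ≤ R^(2*m)*T := by
        rw [abs_mul, abs_of_nonneg (Real.rpow_nonneg hx₀ _), abs_sub_comm]
        exact mul_le_mul hx0le hxs (abs_nonneg _) (Real.rpow_nonneg hRpos.le _)
      have h2 : |(x₀^(2*m) - w)*x| ≤ 3*m*2^m*T*R^(2*m) := by
        rw [abs_mul]
        calc |x₀^(2*m) - w| * |x| ≤ (3*m*2^m*T*R^(2*m-1)) * R :=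
          mul_le_mul hdiff hxR (abs_nonneg _) (by positivity)
        _ = 3*m*2^m*T*(R^(2*m-1)*R) := by ring
        _ = 3*m*2^m*T*R^(2*m) := by
          rw [← Real.rpow_add_one hRpos.ne' (2*m-1)]; ring_nf
      calc |x₀^(2*m)*(x₀-x) + (x₀^(2*m)-w)*x| ≤ _ + _ := abs_add_le _ _
      _ ≤ R^(2*m)*T + 3*m*2^m*T*R^(2*m) := by linarith
    -- assemble
    rw [hLapp, hf21, hf22]
    have e : c * β s + (α s * (w2m m ((γ s).1, (γ s).2.1) * (γ s).2.1)
        - β s * (w2m m ((γ s).1, (γ s).2.1) * (γ s).1))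
        = α s * (w * y) + β s * (c - w * x) := by
      rw [hwdef, hxdef, hydef]; ring
    rw [Real.norm_eq_abs, e]
    have hα := hα1 s hsIcc
    have hβ := hβ1 s hsIcc
    have hwy : |w * y| ≤ 2^m * R^(2*m) * T := by
      rw [abs_mul, abs_of_nonneg hw0]
      exact mul_le_mul hwle hys (abs_nonneg _) (by positivity)
    calc |α s * (w*y) + β s * (c - w*x)| ≤ |α s * (w*y)| + |β s * (c - w*x)| := abs_add_le _ _
    _ = |α s| * |w*y| + |β s| * |c - w*x| := by rw [abs_mul (α s), abs_mul (β s)]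
    _ ≤ 1 * (2^m * R^(2*m) * T) + 1 * (R^(2*m)*T + 3*m*2^m*T*R^(2*m)) := by
      gcongr
    _ ≤ (3*m+2) * 2^m * R^(2*m) * T := by
      have hr : (0:ℝ) ≤ R^(2*m) := Real.rpow_nonneg hRpos.le _
      have hPT : (0:ℝ) ≤ R^(2*m)*T := mul_nonneg hr hT
      have hkey : R^(2*m)*T ≤ 2^m * (R^(2*m)*T) := le_mul_of_one_le_left hPT h2m
      linarith [hkey]
  -- conclude
  have hnorm := intervalIntegral.norm_integral_le_of_norm_le_const hbound
  rw [← h, Real.norm_eq_abs] at hnorm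
  have hcomm : |τ + c * η| = |c * η + τ| := by rw [add_comm]
  rw [hcomm]
  calc |c * η + τ| ≤ ((3*m+2) * 2^m * R^(2*m) * T) * |T - 0| := hnorm
  _ = (3*m+2) * 2^m * R^(2*m) * T^2 := by rw [sub_zero, abs_of_nonneg hT]; ring

lemma pow8 (m : ℝ) : (2:ℝ)^m * 2^(2*m) = 8^m := by
  have h8 : (8:ℝ)^m = 2^(3*m) := by
    rw [show (8:ℝ) = (2:ℝ)^((3:ℕ):ℝ) by rw [Real.rpow_natCast]; norm_num,
      ← Real.rpow_mul (by norm_num : (0:ℝ) ≤ 2)]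
    norm_num
  rw [h8, ← Real.rpow_add two_pos]; ring_nf

lemma claimV (m : ℝ) (hm : 1 ≤ m) {A T x₀ : ℝ} (hA0 : 0 ≤ A) (hT : 0 ≤ T) (hx₀ : 0 ≤ x₀)
    (hxT : x₀ ≤ T) (hkey : A ≤ (3*m+2)*2^m*(x₀+T)^(2*m)*T^2) :
    A^(1/(2*m+2)) ≤ ((3*m+2) * 8^m)^(1/(2*m+2)) * T := by
  have hden : (0:ℝ) < 2*m+2 := by linarith
  have he : (0:ℝ) < 1/(2*m+2) := by positivity
  have hB0 : (0:ℝ) < (3*m+2) * 8^m := by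
    have : (0:ℝ) < (8:ℝ)^m := Real.rpow_pos_of_pos (by norm_num) m
    nlinarith
  rcases eq_or_lt_of_le hT with hT0 | hTpos
  · have hA : A = 0 := le_antisymm (by rw [← hT0] at hkey; simpa using hkey) hA0
    rw [hA, Real.zero_rpow he.ne']
    positivity
  · have hco : (0:ℝ) ≤ (3*m+2)*2^m := by
      have : (0:ℝ) ≤ (2:ℝ)^m := Real.rpow_nonneg (by norm_num) m
      nlinarith
    have hstep : (x₀+T)^(2*m) ≤ 2^(2*m) * T^(2*m) := by
      calc (x₀+T)^(2*m) ≤ (2*T)^(2*m) :=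
        Real.rpow_le_rpow (by linarith) (by linarith) (by linarith)
      _ = 2^(2*m) * T^(2*m) := Real.mul_rpow (by norm_num) hT
    have hTeq : T^(2*m) * T^2 = T^(2*m+2) := by
      rw [← Real.rpow_natCast T 2, ← Real.rpow_add hTpos]
      norm_num
    have h1 : A ≤ ((3*m+2) * 8^m) * T^(2*m+2) := by
      calc A ≤ (3*m+2)*2^m*(x₀+T)^(2*m)*T^2 := hkey
      _ ≤ (3*m+2)*2^m*(2^(2*m) * T^(2*m))*T^2 :=
        mul_le_mul_of_nonneg_right (mul_le_mul_of_nonneg_left hstep hco) (sq_nonneg T)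
      _ = ((3*m+2) * (2^m * 2^(2*m))) * (T^(2*m) * T^2) := by ring
      _ = ((3*m+2) * 8^m) * T^(2*m+2) := by rw [pow8, hTeq]
    calc A^(1/(2*m+2)) ≤ (((3*m+2) * 8^m) * T^(2*m+2))^(1/(2*m+2)) :=
      Real.rpow_le_rpow hA0 h1 he.le
    _ = ((3*m+2) * 8^m)^(1/(2*m+2)) * (T^(2*m+2))^(1/(2*m+2)) :=
      Real.mul_rpow hB0.le (Real.rpow_nonneg hT _)
    _ = ((3*m+2) * 8^m)^(1/(2*m+2)) * T := by
      rw [← Real.rpow_mul hT, mul_one_div, div_self hden.ne', Real.rpow_one]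

lemma claimU (m : ℝ) (hm : 1 ≤ m) {A T x₀ : ℝ} (hA0 : 0 ≤ A) (hT : 0 ≤ T) (hx₀ : 0 < x₀)
    (hTx : T ≤ x₀) (hkey : A ≤ (3*m+2)*2^m*(x₀+T)^(2*m)*T^2) :
    A^((1:ℝ)/2) / x₀^m ≤ ((3*m+2) * 8^m)^((1:ℝ)/2) * T := by
  have hB0 : (0:ℝ) < (3*m+2) * 8^m := by
    have : (0:ℝ) < (8:ℝ)^m := Real.rpow_pos_of_pos (by norm_num) m
    nlinarith
  have hxm : (0:ℝ) < x₀^m := Real.rpow_pos_of_pos hx₀ m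
  have hco : (0:ℝ) ≤ (3*m+2)*2^m := by
    have : (0:ℝ) ≤ (2:ℝ)^m := Real.rpow_nonneg (by norm_num) m
    nlinarith
  have hstep : (x₀+T)^(2*m) ≤ 2^(2*m) * x₀^(2*m) := by
    calc (x₀+T)^(2*m) ≤ (2*x₀)^(2*m) :=
      Real.rpow_le_rpow (by linarith) (by linarith) (by linarith)
    _ = 2^(2*m) * x₀^(2*m) := Real.mul_rpow (by norm_num) hx₀.le
  have h1 : A ≤ (((3*m+2) * 8^m) * x₀^(2*m)) * T^2 := by
    calc A ≤ (3*m+2)*2^m*(x₀+T)^(2*m)*T^2 := hkey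
    _ ≤ (3*m+2)*2^m*(2^(2*m) * x₀^(2*m))*T^2 :=
      mul_le_mul_of_nonneg_right (mul_le_mul_of_nonneg_left hstep hco) (sq_nonneg T)
    _ = ((3*m+2) * (2^m * 2^(2*m))) * x₀^(2*m) * T^2 := by ring
    _ = (((3*m+2) * 8^m) * x₀^(2*m)) * T^2 := by rw [pow8]
  have hx2m : (x₀^(2*m))^((1:ℝ)/2) = x₀^m := by
    rw [← Real.rpow_mul hx₀.le, show 2*m*((1:ℝ)/2) = m by ring]
  have hT2 : ((T:ℝ)^2)^((1:ℝ)/2) = T := by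
    rw [← Real.rpow_natCast T 2, ← Real.rpow_mul hT]
    norm_num
  have h2 : A^((1:ℝ)/2) ≤ ((3*m+2) * 8^m)^((1:ℝ)/2) * x₀^m * T := by
    calc A^((1:ℝ)/2) ≤ ((((3*m+2) * 8^m) * x₀^(2*m)) * T^2)^((1:ℝ)/2) :=
      Real.rpow_le_rpow hA0 h1 (by norm_num)
    _ = (((3*m+2) * 8^m) * x₀^(2*m))^((1:ℝ)/2) * (T^2)^((1:ℝ)/2) :=
      Real.mul_rpow (by positivity) (sq_nonneg T)
    _ = ((3*m+2) * 8^m)^((1:ℝ)/2) * (x₀^(2*m))^((1:ℝ)/2) * (T^2)^((1:ℝ)/2) := by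
      rw [Real.mul_rpow hB0.le (Real.rpow_nonneg hx₀.le _)]
    _ = ((3*m+2) * 8^m)^((1:ℝ)/2) * x₀^m * T := by rw [hx2m, hT2]
  rw [div_le_iff₀ hxm]
  calc A^((1:ℝ)/2) ≤ ((3*m+2) * 8^m)^((1:ℝ)/2) * x₀^m * T := h2
  _ = ((3*m+2) * 8^m)^((1:ℝ)/2) * T * x₀^m := by ring


/-- Lower bound for the time needed by a unit-speed horizontal curve from `(x₀,0,0)`
to `(ξ,η,τ)`:  `T ≥ C⁻¹ min{ |τ + x₀^(2m+1) η|^(1/2)/x₀^m , |τ + x₀^(2m+1) η|^(1/(2m+2)) }`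
(with the first term interpreted as `+∞` when `x₀ = 0`). -/
theorem stmt3 (m : ℝ) (hm : 1 ≤ m) :
    ∃ C : ℝ, 0 < C ∧ ∀ (x₀ T ξ η τ : ℝ) (γ : ℝ → ℝ × ℝ × ℝ) (α β : ℝ → ℝ),
      0 ≤ x₀ → 0 ≤ T →
      IsHorizontal m γ α β T →
      γ 0 = (x₀, 0, 0) → γ T = (ξ, η, τ) →
      (∀ s ∈ Icc (0 : ℝ) T, α s ^ 2 + β s ^ 2 = 1) →
      (0 < x₀ →
        C⁻¹ * min (|τ + x₀ ^ (2 * m + 1) * η| ^ ((1 : ℝ) / 2) / x₀ ^ m)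
          (|τ + x₀ ^ (2 * m + 1) * η| ^ (1 / (2 * m + 2))) ≤ T) ∧
      (x₀ = 0 → C⁻¹ * |τ + x₀ ^ (2 * m + 1) * η| ^ (1 / (2 * m + 2)) ≤ T) := by
  set B : ℝ := (3*m+2) * 8^m with hB
  have hB0 : (0:ℝ) < B := by
    have : (0:ℝ) < (8:ℝ)^m := Real.rpow_pos_of_pos (by norm_num) m
    rw [hB]; nlinarith
  set C : ℝ := B^((1:ℝ)/2) + B^(1/(2*m+2)) with hC
  have hCpos : 0 < C := by
    have h1 := Real.rpow_pos_of_pos hB0 ((1:ℝ)/2)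
    have h2 := Real.rpow_pos_of_pos hB0 (1/(2*m+2))
    rw [hC]; linarith
  have hC1 : B^((1:ℝ)/2) ≤ C := le_add_of_nonneg_right (Real.rpow_nonneg hB0.le _)
  have hC2 : B^(1/(2*m+2)) ≤ C := le_add_of_nonneg_left (Real.rpow_nonneg hB0.le _)
  have hCinv : (0:ℝ) ≤ C⁻¹ := inv_nonneg.2 hCpos.le
  refine ⟨C, hCpos, ?_⟩
  intro x₀ T ξ η τ γ α β hx₀ hT hhor h0 hTv hunit
  have hkey := key_bound m hm x₀ T ξ η τ γ α β hx₀ hT hhor h0 hTv hunit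
  set A := |τ + x₀ ^ (2*m+1) * η| with hA
  have hA0 : 0 ≤ A := abs_nonneg _
  have hVgen : x₀ ≤ T → C⁻¹ * A^(1/(2*m+2)) ≤ T := by
    intro hxT
    have h := claimV m hm hA0 hT hx₀ hxT hkey
    calc C⁻¹ * A^(1/(2*m+2)) ≤ C⁻¹ * (C * T) :=
      mul_le_mul_of_nonneg_left (h.trans (mul_le_mul_of_nonneg_right hC2 hT)) hCinv
    _ = T := inv_mul_cancel_left₀ hCpos.ne' T
  constructor
  · intro hx0pos
    rcases le_total T x₀ with hTx | hxT
    · have h := claimU m hm hA0 hT hx0pos hTx hkey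
      calc C⁻¹ * min (A^((1:ℝ)/2)/x₀^m) (A^(1/(2*m+2)))
          ≤ C⁻¹ * (A^((1:ℝ)/2)/x₀^m) := mul_le_mul_of_nonneg_left (min_le_left _ _) hCinv
      _ ≤ C⁻¹ * (C * T) :=
        mul_le_mul_of_nonneg_left (h.trans (mul_le_mul_of_nonneg_right hC1 hT)) hCinv
      _ = T := inv_mul_cancel_left₀ hCpos.ne' T
    · calc C⁻¹ * min (A^((1:ℝ)/2)/x₀^m) (A^(1/(2*m+2)))
          ≤ C⁻¹ * (A^(1/(2*m+2))) := mul_le_mul_of_nonneg_left (min_le_right _ _) hCinv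
      _ ≤ T := hVgen hxT
  · intro h0x
    exact hVgen (by rw [h0x]; exact hT)
end
end

section
/- Let m ≥ 1 and let d be the Carnot–Carathéodory distance of X = ∂_x + |z|^{2m} y ∂_t and Y = ∂_y − |z|^{2m} x ∂_t on ℝ³. Then for every z ∈ ℂ and t, τ ∈ ℝ there is a constant C > 0 depending only on m with d((z,t),(z,τ)) ≤ C min{ |τ−t|^{1/(2m+2)}, |τ−t|^{1/2}/|z|^m }. -/
open MeasureTheory Set

noncomputable section

/- ### Auxiliary construction -/

def Kp (m x : ℝ) : ℝ := (x ^ 2) ^ m * x ^ 2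

def pf1 (u1 u2 r ρ t0 : ℝ) (s : ℝ) : ℝ × ℝ × ℝ :=
  ((r + (ρ - r) * s) * u1, (r + (ρ - r) * s) * u2, t0)

def pf2 (m u1 u2 ρ a t0 : ℝ) (s : ℝ) : ℝ × ℝ × ℝ :=
  (ρ * (u1 * Real.cos (a * (s - 1)) - u2 * Real.sin (a * (s - 1))),
   ρ * (u1 * Real.sin (a * (s - 1)) + u2 * Real.cos (a * (s - 1))),
   t0 - Kp m ρ * (a * (s - 1)))

def pf3 (m u1 u2 r ρ a t0 : ℝ) (s : ℝ) : ℝ × ℝ × ℝ :=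
  ((ρ + (r - ρ) * (s - 2)) * (u1 * Real.cos a - u2 * Real.sin a),
   (ρ + (r - ρ) * (s - 2)) * (u1 * Real.sin a + u2 * Real.cos a),
   t0 - Kp m ρ * a)

def pf4 (m u1 u2 r ρ a b t0 : ℝ) (s : ℝ) : ℝ × ℝ × ℝ :=
  (r * (u1 * Real.cos (a + b * (s - 3)) - u2 * Real.sin (a + b * (s - 3))),
   r * (u1 * Real.sin (a + b * (s - 3)) + u2 * Real.cos (a + b * (s - 3))),
   t0 - Kp m ρ * a - Kp m r * (b * (s - 3)))

def pγ (m u1 u2 r ρ a b t0 : ℝ) (s : ℝ) : ℝ × ℝ × ℝ :=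
  if s ≤ 1 then pf1 u1 u2 r ρ t0 s
  else if s ≤ 2 then pf2 m u1 u2 ρ a t0 s
  else if s ≤ 3 then pf3 m u1 u2 r ρ a t0 s
  else pf4 m u1 u2 r ρ a b t0 s

def pα (u1 u2 r ρ a b : ℝ) (s : ℝ) : ℝ :=
  if s < 1 then (ρ - r) * u1
  else if s < 2 then ρ * a * (-(u1 * Real.sin (a * (s - 1))) - u2 * Real.cos (a * (s - 1)))
  else if s < 3 then (r - ρ) * (u1 * Real.cos a - u2 * Real.sin a)
  else r * b * (-(u1 * Real.sin (a + b * (s - 3))) - u2 * Real.cos (a + b * (s - 3)))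

def pβ (u1 u2 r ρ a b : ℝ) (s : ℝ) : ℝ :=
  if s < 1 then (ρ - r) * u2
  else if s < 2 then ρ * a * (u1 * Real.cos (a * (s - 1)) - u2 * Real.sin (a * (s - 1)))
  else if s < 3 then (r - ρ) * (u1 * Real.sin a + u2 * Real.cos a)
  else r * b * (u1 * Real.cos (a + b * (s - 3)) - u2 * Real.sin (a + b * (s - 3)))

def pD (m u1 u2 r ρ a b : ℝ) (s : ℝ) : ℝ × ℝ × ℝ :=
  if s < 1 then ((ρ - r) * u1, (ρ - r) * u2, 0)
  else if s < 2 then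
    (ρ * a * (-(u1 * Real.sin (a * (s - 1))) - u2 * Real.cos (a * (s - 1))),
     ρ * a * (u1 * Real.cos (a * (s - 1)) - u2 * Real.sin (a * (s - 1))),
     -(Kp m ρ * a))
  else if s < 3 then
    ((r - ρ) * (u1 * Real.cos a - u2 * Real.sin a),
     (r - ρ) * (u1 * Real.sin a + u2 * Real.cos a), 0)
  else
    (r * b * (-(u1 * Real.sin (a + b * (s - 3))) - u2 * Real.cos (a + b * (s - 3))),
     r * b * (u1 * Real.cos (a + b * (s - 3)) - u2 * Real.sin (a + b * (s - 3))),
     -(Kp m r * b))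

section PC
variable {m u1 u2 r ρ a b t0 : ℝ}

lemma hD1 (s : ℝ) : HasDerivAt (pf1 u1 u2 r ρ t0) ((ρ - r) * u1, (ρ - r) * u2, (0:ℝ)) s := by
  unfold pf1
  refine HasDerivAt.prodMk ?_ (HasDerivAt.prodMk ?_ (hasDerivAt_const _ _))
  · simpa using (((hasDerivAt_id s).const_mul (ρ - r)).const_add r).mul_const u1
  · simpa using (((hasDerivAt_id s).const_mul (ρ - r)).const_add r).mul_const u2

lemma hD2 (s : ℝ) : HasDerivAt (pf2 m u1 u2 ρ a t0)
    (ρ * a * (-(u1 * Real.sin (a * (s - 1))) - u2 * Real.cos (a * (s - 1))),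
     ρ * a * (u1 * Real.cos (a * (s - 1)) - u2 * Real.sin (a * (s - 1))),
     -(Kp m ρ * a)) s := by
  unfold pf2
  have hθ : HasDerivAt (fun s : ℝ => a * (s - 1)) a s := by
    simpa using ((hasDerivAt_id s).sub_const 1).const_mul a
  refine HasDerivAt.prodMk ?_ (HasDerivAt.prodMk ?_ ?_)
  · have := (((hθ.cos).const_mul u1).sub ((hθ.sin).const_mul u2)).const_mul ρ
    exact this.congr_deriv (by ring)
  · have := (((hθ.sin).const_mul u1).add ((hθ.cos).const_mul u2)).const_mul ρ
    exact this.congr_deriv (by ring)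
  · have := (hθ.const_mul (Kp m ρ)).const_sub t0
    convert this using 1 <;> ring

lemma hD3 (s : ℝ) : HasDerivAt (pf3 m u1 u2 r ρ a t0)
    ((r - ρ) * (u1 * Real.cos a - u2 * Real.sin a),
     (r - ρ) * (u1 * Real.sin a + u2 * Real.cos a), (0:ℝ)) s := by
  unfold pf3
  refine HasDerivAt.prodMk ?_ (HasDerivAt.prodMk ?_ (hasDerivAt_const _ _))
  · simpa using ((((hasDerivAt_id s).sub_const 2).const_mul (r - ρ)).const_add ρ).mul_const
      (u1 * Real.cos a - u2 * Real.sin a)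
  · simpa using ((((hasDerivAt_id s).sub_const 2).const_mul (r - ρ)).const_add ρ).mul_const
      (u1 * Real.sin a + u2 * Real.cos a)

lemma hD4 (s : ℝ) : HasDerivAt (pf4 m u1 u2 r ρ a b t0)
    (r * b * (-(u1 * Real.sin (a + b * (s - 3))) - u2 * Real.cos (a + b * (s - 3))),
     r * b * (u1 * Real.cos (a + b * (s - 3)) - u2 * Real.sin (a + b * (s - 3))),
     -(Kp m r * b)) s := by
  unfold pf4
  have hθ : HasDerivAt (fun s : ℝ => a + b * (s - 3)) b s := by
    simpa using (((hasDerivAt_id s).sub_const 3).const_mul b).const_add a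
  refine HasDerivAt.prodMk ?_ (HasDerivAt.prodMk ?_ ?_)
  · have := (((hθ.cos).const_mul u1).sub ((hθ.sin).const_mul u2)).const_mul r
    exact this.congr_deriv (by ring)
  · have := (((hθ.sin).const_mul u1).add ((hθ.cos).const_mul u2)).const_mul r
    exact this.congr_deriv (by ring)
  · have := ((((hasDerivAt_id s).sub_const 3).const_mul b).const_mul (Kp m r)).const_sub
      (t0 - Kp m ρ * a)
    exact this.congr_deriv (by ring)

lemma pγ_eq1 {s : ℝ} (h1 : s ≤ 1) : pγ m u1 u2 r ρ a b t0 s = pf1 u1 u2 r ρ t0 s := by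
  simp [pγ, h1]

lemma pγ_eq2 {s : ℝ} (h1 : 1 ≤ s) (h2 : s ≤ 2) :
    pγ m u1 u2 r ρ a b t0 s = pf2 m u1 u2 ρ a t0 s := by
  rcases eq_or_lt_of_le h1 with h | h
  · subst h
    simp [pγ, pf1, pf2]
  · simp [pγ, not_le.mpr h, h2]

lemma pγ_eq3 {s : ℝ} (h1 : 2 ≤ s) (h2 : s ≤ 3) :
    pγ m u1 u2 r ρ a b t0 s = pf3 m u1 u2 r ρ a t0 s := by
  rcases eq_or_lt_of_le h1 with h | h
  · have hs : s = 2 := h.symm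
    subst hs
    have : ¬ (2:ℝ) ≤ 1 := by norm_num
    simp [pγ, this, pf2, pf3]
    norm_num
  · have hn1 : ¬ s ≤ 1 := by linarith
    have hn2 : ¬ s ≤ 2 := not_le.mpr h
    simp [pγ, hn1, hn2, h2]

lemma pγ_eq4 {s : ℝ} (h1 : 3 ≤ s) :
    pγ m u1 u2 r ρ a b t0 s = pf4 m u1 u2 r ρ a b t0 s := by
  rcases eq_or_lt_of_le h1 with h | h
  · have hs : s = 3 := h.symm
    subst hs
    have h1' : ¬ (3:ℝ) ≤ 1 := by norm_num
    have h2' : ¬ (3:ℝ) ≤ 2 := by norm_num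
    simp [pγ, h1', h2', pf3, pf4]
    norm_num
  · have hn1 : ¬ s ≤ 1 := by linarith
    have hn2 : ¬ s ≤ 2 := by linarith
    have hn3 : ¬ s ≤ 3 := not_le.mpr h
    simp [pγ, hn1, hn2, hn3]

lemma pF_eq (hu : u1 ^ 2 + u2 ^ 2 = 1) (s : ℝ) :
    pα u1 u2 r ρ a b s • Xvf m (pγ m u1 u2 r ρ a b t0 s)
      + pβ u1 u2 r ρ a b s • Yvf m (pγ m u1 u2 r ρ a b t0 s)
    = pD m u1 u2 r ρ a b s := by
  rcases lt_or_ge s 1 with h1 | h1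
  · rw [pγ_eq1 h1.le]
    simp only [pα, pβ, pD, if_pos h1, pf1, Xvf, Yvf, w2m, Prod.smul_mk, smul_eq_mul,
      Prod.mk_add_mk, Prod.mk.injEq]
    refine ⟨by ring, by ring, by ring⟩
  · rcases lt_or_ge s 2 with h2 | h2
    · rw [pγ_eq2 h1 h2.le]
      have hQ : (u1 * Real.cos (a * (s - 1)) - u2 * Real.sin (a * (s - 1)))^2
          + (u1 * Real.sin (a * (s - 1)) + u2 * Real.cos (a * (s - 1)))^2 = 1 := by
        have h := Real.sin_sq_add_cos_sq (a * (s - 1))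
        linear_combination (u1^2 + u2^2) * h + hu
      have hbase : (ρ * (u1 * Real.cos (a * (s - 1)) - u2 * Real.sin (a * (s - 1))))^2
          + (ρ * (u1 * Real.sin (a * (s - 1)) + u2 * Real.cos (a * (s - 1))))^2 = ρ^2 := by
        linear_combination ρ^2 * hQ
      simp only [pα, pβ, pD, if_neg (not_lt.mpr h1), if_pos h2, pf2, Xvf, Yvf, w2m,
        Prod.smul_mk, smul_eq_mul, Prod.mk_add_mk, Prod.mk.injEq]
      rw [hbase]
      refine ⟨by ring, by ring, ?_⟩
      simp only [Kp]
      linear_combination (-((ρ^2 : ℝ)^m * ρ^2 * a)) * hQ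
    · rcases lt_or_ge s 3 with h3 | h3
      · rw [pγ_eq3 h2 h3.le]
        simp only [pα, pβ, pD, if_neg (not_lt.mpr h1), if_neg (not_lt.mpr h2), if_pos h3,
          pf3, Xvf, Yvf, w2m, Prod.smul_mk, smul_eq_mul, Prod.mk_add_mk, Prod.mk.injEq]
        refine ⟨by ring, by ring, by ring⟩
      · rw [pγ_eq4 h3]
        have hQ : (u1 * Real.cos (a + b * (s - 3)) - u2 * Real.sin (a + b * (s - 3)))^2
            + (u1 * Real.sin (a + b * (s - 3)) + u2 * Real.cos (a + b * (s - 3)))^2 = 1 := by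
          have h := Real.sin_sq_add_cos_sq (a + b * (s - 3))
          linear_combination (u1^2 + u2^2) * h + hu
        have hbase : (r * (u1 * Real.cos (a + b * (s - 3)) - u2 * Real.sin (a + b * (s - 3))))^2
            + (r * (u1 * Real.sin (a + b * (s - 3)) + u2 * Real.cos (a + b * (s - 3))))^2 = r^2 := by
          linear_combination r^2 * hQ
        simp only [pα, pβ, pD, if_neg (not_lt.mpr h1), if_neg (not_lt.mpr h2),
          if_neg (not_lt.mpr h3), pf4, Xvf, Yvf, w2m, Prod.smul_mk, smul_eq_mul,
          Prod.mk_add_mk, Prod.mk.injEq]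
        rw [hbase]
        refine ⟨by ring, by ring, ?_⟩
        simp only [Kp]
        linear_combination (-((r^2 : ℝ)^m * r^2 * b)) * hQ



/-- interval integrability from agreeing with a continuous function on the open interval -/
lemma II_of_Ioo {E : Type*} [NormedAddCommGroup E] {f g : ℝ → E} {k l : ℝ} (hkl : k ≤ l)
    (hg : Continuous g) (h : ∀ s ∈ Ioo k l, f s = g s) :
    IntervalIntegrable f volume k l := by
  have hgi := hg.intervalIntegrable (μ := volume) k l
  rw [intervalIntegrable_iff_integrableOn_Ioo_of_le hkl] at hgi ⊢
  exact hgi.congr_fun (fun s hs => (h s hs).symm) measurableSet_Ioo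

lemma pγ_cont : Continuous (pγ m u1 u2 r ρ a b t0) := by
  have c1 : Continuous (pf1 u1 u2 r ρ t0) := by unfold pf1; fun_prop
  have c2 : Continuous (pf2 m u1 u2 ρ a t0) := by unfold pf2; fun_prop
  have c3 : Continuous (pf3 m u1 u2 r ρ a t0) := by unfold pf3; fun_prop
  have c4 : Continuous (pf4 m u1 u2 r ρ a b t0) := by unfold pf4; fun_prop
  have m12 : pf1 u1 u2 r ρ t0 1 = pf2 m u1 u2 ρ a t0 1 :=
    (pγ_eq1 (m := m) (a := a) (b := b) le_rfl).symm.trans (pγ_eq2 le_rfl one_le_two)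
  have m23 : pf2 m u1 u2 ρ a t0 2 = pf3 m u1 u2 r ρ a t0 2 :=
    (pγ_eq2 (r := r) (b := b) one_le_two le_rfl).symm.trans (pγ_eq3 le_rfl (by norm_num))
  have m34 : pf3 m u1 u2 r ρ a t0 3 = pf4 m u1 u2 r ρ a b t0 3 :=
    (pγ_eq3 (b := b) (by norm_num) le_rfl).symm.trans (pγ_eq4 le_rfl)
  unfold pγ
  refine Continuous.if_le c1 ?_ continuous_id continuous_const ?_
  · refine Continuous.if_le c2 ?_ continuous_id continuous_const ?_
    · exact Continuous.if_le c3 c4 continuous_id continuous_const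
        (by intro x hx; subst hx; exact m34)
    · intro x hx; subst hx; rw [if_pos (by norm_num : (2:ℝ) ≤ 3), m23]
  · intro x hx; subst hx; rw [if_pos (by norm_num : (1:ℝ) ≤ 2), m12]

lemma pγ_deriv (hu : u1 ^ 2 + u2 ^ 2 = 1) :
    ∀ s ∈ Ioo (0:ℝ) 4, HasDerivWithinAt (pγ m u1 u2 r ρ a b t0)
      (pD m u1 u2 r ρ a b s) (Ioi s) s := by
  intro s hs
  rcases lt_or_ge s 1 with h1 | h1
  · have ev : pγ m u1 u2 r ρ a b t0 =ᶠ[nhds s] pf1 u1 u2 r ρ t0 :=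
      Filter.eventuallyEq_of_mem (Iio_mem_nhds h1) (fun x hx => pγ_eq1 (le_of_lt hx))
    have h := ((hD1 (t0 := t0) s).congr_of_eventuallyEq ev).hasDerivWithinAt (s := Ioi s)
    refine h.congr_deriv ?_
    simp only [pD]; rw [if_pos h1]
  · rcases lt_or_ge s 2 with h2 | h2
    · rcases eq_or_lt_of_le h1 with he | hlt
      · subst he
        have ev : pγ m u1 u2 r ρ a b t0 =ᶠ[nhdsWithin 1 (Ioi 1)] pf2 m u1 u2 ρ a t0 :=
          Filter.eventuallyEq_of_mem (Ioo_mem_nhdsGT_of_mem (⟨le_rfl, one_lt_two⟩ : (1:ℝ) ∈ Ico 1 2))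
            (fun x hx => pγ_eq2 hx.1.le hx.2.le)
        have h := ((hD2 (t0 := t0) 1).hasDerivWithinAt (s := Ioi 1)).congr_of_eventuallyEq
          ev (pγ_eq2 le_rfl one_le_two)
        refine h.congr_deriv ?_
        simp only [pD]; rw [if_neg (lt_irrefl 1), if_pos one_lt_two]
      · have ev : pγ m u1 u2 r ρ a b t0 =ᶠ[nhds s] pf2 m u1 u2 ρ a t0 :=
          Filter.eventuallyEq_of_mem (Ioo_mem_nhds hlt h2)
            (fun x hx => pγ_eq2 hx.1.le hx.2.le)
        have h := ((hD2 (t0 := t0) s).congr_of_eventuallyEq ev).hasDerivWithinAt (s := Ioi s)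
        refine h.congr_deriv ?_
        simp only [pD]; rw [if_neg (not_lt.mpr h1), if_pos h2]
    · rcases lt_or_ge s 3 with h3 | h3
      · rcases eq_or_lt_of_le h2 with he | hlt
        · subst he
          have ev : pγ m u1 u2 r ρ a b t0 =ᶠ[nhdsWithin 2 (Ioi 2)] pf3 m u1 u2 r ρ a t0 :=
            Filter.eventuallyEq_of_mem (Ioo_mem_nhdsGT_of_mem (⟨le_rfl, by norm_num⟩ : (2:ℝ) ∈ Ico 2 3))
              (fun x hx => pγ_eq3 hx.1.le hx.2.le)
          have h := ((hD3 (t0 := t0) 2).hasDerivWithinAt (s := Ioi 2)).congr_of_eventuallyEq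
            ev (pγ_eq3 le_rfl (by norm_num))
          refine h.congr_deriv ?_
          simp only [pD]; rw [if_neg (by norm_num : ¬ (2:ℝ) < 1), if_neg (lt_irrefl 2),
            if_pos (by norm_num : (2:ℝ) < 3)]
        · have ev : pγ m u1 u2 r ρ a b t0 =ᶠ[nhds s] pf3 m u1 u2 r ρ a t0 :=
            Filter.eventuallyEq_of_mem (Ioo_mem_nhds hlt h3)
              (fun x hx => pγ_eq3 hx.1.le hx.2.le)
          have h := ((hD3 (t0 := t0) s).congr_of_eventuallyEq ev).hasDerivWithinAt (s := Ioi s)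
          refine h.congr_deriv ?_
          simp only [pD]; rw [if_neg (by linarith : ¬ s < 1), if_neg (not_lt.mpr h2), if_pos h3]
      · rcases eq_or_lt_of_le h3 with he | hlt
        · subst he
          have ev : pγ m u1 u2 r ρ a b t0 =ᶠ[nhdsWithin 3 (Ioi 3)] pf4 m u1 u2 r ρ a b t0 :=
            Filter.eventuallyEq_of_mem (Ioo_mem_nhdsGT_of_mem (⟨le_rfl, by norm_num⟩ : (3:ℝ) ∈ Ico 3 4))
              (fun x hx => pγ_eq4 hx.1.le)
          have h := ((hD4 3).hasDerivWithinAt (s := Ioi 3)).congr_of_eventuallyEq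
            ev (pγ_eq4 le_rfl)
          refine h.congr_deriv ?_
          simp only [pD]; rw [if_neg (by norm_num : ¬ (3:ℝ) < 1),
            if_neg (by norm_num : ¬ (3:ℝ) < 2), if_neg (lt_irrefl 3)]
        · have ev : pγ m u1 u2 r ρ a b t0 =ᶠ[nhds s] pf4 m u1 u2 r ρ a b t0 :=
            Filter.eventuallyEq_of_mem (Ioi_mem_nhds hlt) (fun x hx => pγ_eq4 (le_of_lt hx))
          have h := ((hD4 s).congr_of_eventuallyEq ev).hasDerivWithinAt (s := Ioi s)
          refine h.congr_deriv ?_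
          simp only [pD]; rw [if_neg (by linarith : ¬ s < 1), if_neg (by linarith : ¬ s < 2),
            if_neg (not_lt.mpr h3)]

lemma pD_int : IntervalIntegrable (pD m u1 u2 r ρ a b) volume 0 4 := by
  have i1 : IntervalIntegrable (pD m u1 u2 r ρ a b) volume 0 1 := by
    refine II_of_Ioo zero_le_one (g := fun _ => ((ρ - r) * u1, (ρ - r) * u2, (0:ℝ)))
      continuous_const (fun s hs => ?_)
    simp only [pD]; rw [if_pos hs.2]
  have i2 : IntervalIntegrable (pD m u1 u2 r ρ a b) volume 1 2 := by
    refine II_of_Ioo one_le_two (g := fun s =>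
      (ρ * a * (-(u1 * Real.sin (a * (s - 1))) - u2 * Real.cos (a * (s - 1))),
       ρ * a * (u1 * Real.cos (a * (s - 1)) - u2 * Real.sin (a * (s - 1))),
       -(Kp m ρ * a))) (by fun_prop) (fun s hs => ?_)
    simp only [pD]; rw [if_neg (not_lt.mpr hs.1.le), if_pos hs.2]
  have i3 : IntervalIntegrable (pD m u1 u2 r ρ a b) volume 2 3 := by
    refine II_of_Ioo (by norm_num) (g := fun _ =>
      ((r - ρ) * (u1 * Real.cos a - u2 * Real.sin a),
       (r - ρ) * (u1 * Real.sin a + u2 * Real.cos a), (0:ℝ)))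
      continuous_const (fun s hs => ?_)
    simp only [pD]; rw [if_neg (by have := hs.1; intro h; linarith), if_neg (not_lt.mpr hs.1.le),
      if_pos hs.2]
  have i4 : IntervalIntegrable (pD m u1 u2 r ρ a b) volume 3 4 := by
    refine II_of_Ioo (by norm_num) (g := fun s =>
      (r * b * (-(u1 * Real.sin (a + b * (s - 3))) - u2 * Real.cos (a + b * (s - 3))),
       r * b * (u1 * Real.cos (a + b * (s - 3)) - u2 * Real.sin (a + b * (s - 3))),
       -(Kp m r * b))) (by fun_prop) (fun s hs => ?_)
    simp only [pD]; rw [if_neg (by have := hs.1; intro h; linarith),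
      if_neg (by have := hs.1; intro h; linarith), if_neg (not_lt.mpr hs.1.le)]
  exact (i1.trans i2).trans (i3.trans i4)

lemma pγ_horiz (hu : u1 ^ 2 + u2 ^ 2 = 1) :
    IsHorizontal m (pγ m u1 u2 r ρ a b t0) (pα u1 u2 r ρ a b) (pβ u1 u2 r ρ a b) 4 := by
  intro t ht
  obtain ⟨ht0, ht4⟩ := ht
  have hFeq : (fun s => pα u1 u2 r ρ a b s • Xvf m (pγ m u1 u2 r ρ a b t0 s)
      + pβ u1 u2 r ρ a b s • Yvf m (pγ m u1 u2 r ρ a b t0 s)) = pD m u1 u2 r ρ a b := by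
    funext s; exact pF_eq hu s
  have hint : IntervalIntegrable (pD m u1 u2 r ρ a b) volume 0 t :=
    pD_int.mono_set (by
      rw [uIcc_of_le ht0, uIcc_of_le (by norm_num : (0:ℝ) ≤ 4)]
      exact Icc_subset_Icc le_rfl ht4)
  have key := intervalIntegral.integral_eq_sub_of_hasDeriv_right_of_le
    (f := pγ m u1 u2 r ρ a b t0) (f' := pD m u1 u2 r ρ a b) ht0
    (pγ_cont.continuousOn)
    (fun x hx => pγ_deriv (t0 := t0) hu x ⟨hx.1, lt_of_lt_of_le hx.2 ht4⟩) hint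
  rw [hFeq, key]
  abel

lemma len_bound (hu : u1 ^ 2 + u2 ^ 2 = 1) (hr : 0 ≤ r) (hρ : 0 ≤ ρ) :
    ccLength (pα u1 u2 r ρ a b) (pβ u1 u2 r ρ a b) 4
      ≤ 4 * (|ρ - r| + ρ * |a| + r * |b|) := by
  have hB : ∀ s : ℝ, Real.sqrt (pα u1 u2 r ρ a b s ^ 2 + pβ u1 u2 r ρ a b s ^ 2)
      ≤ |ρ - r| + ρ * |a| + r * |b| := by
    intro s
    have h1 : (0:ℝ) ≤ |ρ - r| := abs_nonneg _
    have h2 : (0:ℝ) ≤ ρ * |a| := mul_nonneg hρ (abs_nonneg _)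
    have h3 : (0:ℝ) ≤ r * |b| := mul_nonneg hr (abs_nonneg _)
    rcases lt_or_ge s 1 with hc | hc
    · have : pα u1 u2 r ρ a b s ^ 2 + pβ u1 u2 r ρ a b s ^ 2 = (ρ - r)^2 := by
        simp only [pα, pβ, if_pos hc]
        linear_combination (ρ - r)^2 * hu
      rw [this, Real.sqrt_sq_eq_abs]; linarith
    · rcases lt_or_ge s 2 with hc2 | hc2
      · have h := Real.sin_sq_add_cos_sq (a * (s - 1))
        have : pα u1 u2 r ρ a b s ^ 2 + pβ u1 u2 r ρ a b s ^ 2 = (ρ * a)^2 := by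
          simp only [pα, pβ, if_neg (not_lt.mpr hc), if_pos hc2]
          linear_combination (ρ*a)^2 * (u1^2+u2^2) * h + (ρ*a)^2 * hu
        rw [this, Real.sqrt_sq_eq_abs, abs_mul, abs_of_nonneg hρ]; linarith
      · rcases lt_or_ge s 3 with hc3 | hc3
        · have : pα u1 u2 r ρ a b s ^ 2 + pβ u1 u2 r ρ a b s ^ 2 = (r - ρ)^2 := by
            simp only [pα, pβ, if_neg (by linarith : ¬ s < 1), if_neg (not_lt.mpr hc2), if_pos hc3]
            have h := Real.sin_sq_add_cos_sq a
            linear_combination (r-ρ)^2 * (u1^2+u2^2) * h + (r-ρ)^2 * hu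
          rw [this, Real.sqrt_sq_eq_abs, abs_sub_comm]; linarith
        · have h := Real.sin_sq_add_cos_sq (a + b * (s - 3))
          have : pα u1 u2 r ρ a b s ^ 2 + pβ u1 u2 r ρ a b s ^ 2 = (r * b)^2 := by
            simp only [pα, pβ, if_neg (by linarith : ¬ s < 1), if_neg (by linarith : ¬ s < 2),
              if_neg (not_lt.mpr hc3)]
            linear_combination (r*b)^2 * (u1^2+u2^2) * h + (r*b)^2 * hu
          rw [this, Real.sqrt_sq_eq_abs, abs_mul, abs_of_nonneg hr]; linarith
  have hint : IntervalIntegrable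
      (fun s => Real.sqrt (pα u1 u2 r ρ a b s ^ 2 + pβ u1 u2 r ρ a b s ^ 2)) volume 0 4 := by
    have e1 : IntervalIntegrable
        (fun s => Real.sqrt (pα u1 u2 r ρ a b s ^ 2 + pβ u1 u2 r ρ a b s ^ 2)) volume 0 1 := by
      refine II_of_Ioo zero_le_one (g := fun s => Real.sqrt (((ρ-r)*u1)^2 + ((ρ-r)*u2)^2))
        (by fun_prop) (fun s hs => ?_)
      simp only [pα, pβ, if_pos hs.2]
    have e2 : IntervalIntegrable
        (fun s => Real.sqrt (pα u1 u2 r ρ a b s ^ 2 + pβ u1 u2 r ρ a b s ^ 2)) volume 1 2 := by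
      refine II_of_Ioo one_le_two (g := fun s => Real.sqrt (
        (ρ * a * (-(u1 * Real.sin (a * (s - 1))) - u2 * Real.cos (a * (s - 1))))^2
        + (ρ * a * (u1 * Real.cos (a * (s - 1)) - u2 * Real.sin (a * (s - 1))))^2))
        (by fun_prop) (fun s hs => ?_)
      simp only [pα, pβ, if_neg (not_lt.mpr hs.1.le), if_pos hs.2]
    have e3 : IntervalIntegrable
        (fun s => Real.sqrt (pα u1 u2 r ρ a b s ^ 2 + pβ u1 u2 r ρ a b s ^ 2)) volume 2 3 := by
      refine II_of_Ioo (by norm_num) (g := fun s => Real.sqrt (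
        ((r - ρ) * (u1 * Real.cos a - u2 * Real.sin a))^2
        + ((r - ρ) * (u1 * Real.sin a + u2 * Real.cos a))^2))
        (by fun_prop) (fun s hs => ?_)
      simp only [pα, pβ, if_neg (by have := hs.1; intro h; linarith : ¬ s < 1),
        if_neg (not_lt.mpr hs.1.le), if_pos hs.2]
    have e4 : IntervalIntegrable
        (fun s => Real.sqrt (pα u1 u2 r ρ a b s ^ 2 + pβ u1 u2 r ρ a b s ^ 2)) volume 3 4 := by
      refine II_of_Ioo (by norm_num) (g := fun s => Real.sqrt (
        (r * b * (-(u1 * Real.sin (a + b * (s - 3))) - u2 * Real.cos (a + b * (s - 3))))^2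
        + (r * b * (u1 * Real.cos (a + b * (s - 3)) - u2 * Real.sin (a + b * (s - 3))))^2))
        (by fun_prop) (fun s hs => ?_)
      simp only [pα, pβ, if_neg (by have := hs.1; intro h; linarith : ¬ s < 1),
        if_neg (by have := hs.1; intro h; linarith : ¬ s < 2), if_neg (not_lt.mpr hs.1.le)]
    exact (e1.trans e2).trans (e3.trans e4)
  unfold ccLength
  calc ∫ s in (0:ℝ)..4, Real.sqrt (pα u1 u2 r ρ a b s ^ 2 + pβ u1 u2 r ρ a b s ^ 2)
      ≤ ∫ _ in (0:ℝ)..4, (|ρ - r| + ρ * |a| + r * |b|) := by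
        exact intervalIntegral.integral_mono_on (by norm_num) hint
          intervalIntegrable_const (fun x _ => hB x)
    _ = 4 * (|ρ - r| + ρ * |a| + r * |b|) := by
        rw [intervalIntegral.integral_const]; simp [smul_eq_mul]

lemma pγ_zero : pγ m u1 u2 r ρ a b t0 0 = (r * u1, r * u2, t0) := by
  rw [pγ_eq1 zero_le_one]; simp [pf1]

lemma pγ_four (hca : Real.cos (a + b) = 1) (hsa : Real.sin (a + b) = 0) :
    pγ m u1 u2 r ρ a b t0 4 = (r * u1, r * u2, t0 - Kp m ρ * a - Kp m r * b) := by
  rw [pγ_eq4 (by norm_num)]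
  simp [pf4, show (4:ℝ) - 3 = 1 by norm_num, hca, hsa]

lemma ccSet_bddBelow (m : ℝ) (p q : ℝ × ℝ × ℝ) :
    BddBelow { L : ℝ | ∃ T, 0 ≤ T ∧ ∃ γ α β, IsHorizontal m γ α β T ∧
      γ 0 = p ∧ γ T = q ∧ L = ccLength α β T } := by
  refine ⟨0, ?_⟩
  rintro L ⟨T, hT, γ, α, β, _, _, _, rfl⟩
  exact intervalIntegral.integral_nonneg hT (fun s _ => Real.sqrt_nonneg _)

lemma key_est (hu : u1 ^ 2 + u2 ^ 2 = 1) (hr : 0 ≤ r) (hρ : 0 ≤ ρ)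
    (hca : Real.cos (a + b) = 1) (hsa : Real.sin (a + b) = 0) :
    ccDist m (r * u1, r * u2, t0) (r * u1, r * u2, t0 - Kp m ρ * a - Kp m r * b)
      ≤ 4 * (|ρ - r| + ρ * |a| + r * |b|) := by
  refine le_trans (csInf_le (ccSet_bddBelow m _ _) ?_) (len_bound hu hr hρ)
  exact ⟨4, by norm_num, pγ m u1 u2 r ρ a b t0, pα u1 u2 r ρ a b, pβ u1 u2 r ρ a b,
    pγ_horiz hu, pγ_zero, pγ_four hca hsa, rfl⟩


end PC

lemma Kp_sq {m x : ℝ} (hm : 1 ≤ m) : Kp m x = (x ^ 2) ^ (m + 1) := by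
  have h1 : m + (1:ℝ) ≠ 0 := by nlinarith
  rw [Kp, Real.rpow_add' (sq_nonneg x) h1, Real.rpow_one]

lemma Kp_rpow {m x : ℝ} (hx : 0 ≤ x) (hm : 1 ≤ m) : Kp m x = x ^ (2*m+2) := by
  rw [Kp_sq hm, show (x^2 : ℝ) = x ^ ((2:ℕ):ℝ) from (Real.rpow_natCast x 2).symm,
    ← Real.rpow_mul hx]
  norm_num; ring_nf

lemma main_est (m : ℝ) (hm : 1 ≤ m) (u1 u2 r t0 τ : ℝ) (hu : u1 ^ 2 + u2 ^ 2 = 1)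
    (hr : 0 ≤ r) :
    ccDist m (r*u1, r*u2, t0) (r*u1, r*u2, τ)
      ≤ (4 + 8*Real.pi) * |τ - t0| ^ (1/(2*m+2)) ∧
    (0 < r → ccDist m (r*u1, r*u2, t0) (r*u1, r*u2, τ)
      ≤ (4 + 8*Real.pi) * min (|τ - t0| ^ (1/(2*m+2)))
          (|τ - t0| ^ ((1:ℝ)/2) / r ^ m)) := by
  have hπ := Real.pi_gt_three
  have hC : (0:ℝ) < 4 + 8*Real.pi := by linarith
  set H := |τ - t0| with hHdef
  have hH0 : 0 ≤ H := abs_nonneg _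
  have h2m2 : (0:ℝ) < 2*m+2 := by linarith
  set e := 1/(2*m+2) with hedef
  have he0 : 0 < e := by rw [hedef]; positivity
  rcases eq_or_lt_of_le hH0 with hH | hH
  · -- H = 0 : τ = t0
    have hτ : τ = t0 := by
      have : τ - t0 = 0 := abs_eq_zero.mp hH.symm
      linarith
    have h0 := key_est (m := m) (u1 := u1) (u2 := u2) (r := r) (ρ := r) (a := 0) (b := 0)
      (t0 := t0) hu hr hr (by simp) (by simp)
    have hcc : ccDist m (r*u1, r*u2, t0) (r*u1, r*u2, τ) ≤ 0 := by
      rw [hτ]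
      simpa using h0
    constructor
    · exact le_trans hcc (by positivity)
    · intro hr'
      refine le_trans hcc (mul_nonneg hC.le (le_min (by positivity) ?_))
      positivity
  · -- H > 0
    rcases le_total r (H ^ e) with hreg | hreg
    · -- regime A : r ≤ H^e ; circle of radius R
      set X := H / (2*Real.pi) with hXdef
      have hX0 : 0 < X := by rw [hXdef]; positivity
      set R := X ^ e with hRdef
      have hR0 : 0 ≤ R := by rw [hRdef]; positivity
      set a : ℝ := if 0 < τ - t0 then -(2*Real.pi) else 2*Real.pi with hadef
      have hKpR : Kp m R = X := by
        rw [Kp_sq hm, hRdef,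
          show ((X ^ e)^2 : ℝ) = (X ^ e) ^ ((2:ℕ):ℝ) from (Real.rpow_natCast _ 2).symm,
          ← Real.rpow_mul hX0.le, ← Real.rpow_mul hX0.le,
          show (e * ((2:ℕ):ℝ) * (m+1) : ℝ) = 1 by rw [hedef]; push_cast; field_simp,
          Real.rpow_one]
      have hca : Real.cos (a + 0) = 1 := by
        rw [add_zero, hadef]
        split <;> simp [Real.cos_two_pi]
      have hsa : Real.sin (a + 0) = 0 := by
        rw [add_zero, hadef]
        split <;> simp [Real.sin_two_pi]
      have hX2π : X * (2*Real.pi) = H := by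
        rw [hXdef]; field_simp
      have hend : t0 - Kp m R * a - Kp m r * 0 = τ := by
        rw [mul_zero, sub_zero, hKpR, hadef]
        split
        · rename_i hsign
          have hH' : H = τ - t0 := abs_of_pos hsign
          linear_combination hX2π + hH'
        · rename_i hsign
          have hH' : H = -(τ - t0) := abs_of_nonpos (not_lt.mp hsign)
          linear_combination (-1 : ℝ) * hX2π - hH'
      have hkey := key_est (m := m) (u1 := u1) (u2 := u2) (r := r) (ρ := R) (a := a)
        (b := 0) (t0 := t0) hu hr hR0 hca hsa
      rw [hend] at hkey
      have habs : |a| = 2*Real.pi := by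
        rw [hadef]; split
        · rw [abs_neg, abs_of_pos (by positivity)]
        · rw [abs_of_pos (by positivity)]
      have hRle : R ≤ H ^ e := by
        rw [hRdef]
        refine Real.rpow_le_rpow hX0.le ?_ he0.le
        rw [hXdef]
        exact div_le_self hH0 (by linarith)
      have hHe0 : 0 < H ^ e := Real.rpow_pos_of_pos hH e
      have hbound : 4 * (|R - r| + R * |a| + r * |(0:ℝ)|) ≤ (4 + 8*Real.pi) * H ^ e := by
        have h1 : |R - r| ≤ H ^ e := by
          rw [abs_sub_le_iff]
          constructor <;> linarith
        have h2 : 8*Real.pi*R ≤ 8*Real.pi*(H ^ e) :=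
          mul_le_mul_of_nonneg_left hRle (by positivity)
        rw [habs, abs_zero, mul_zero, add_zero]
        nlinarith
      have hA : ccDist m (r*u1, r*u2, t0) (r*u1, r*u2, τ) ≤ (4 + 8*Real.pi) * H ^ e :=
        le_trans hkey hbound
      refine ⟨hA, fun hr' => ?_⟩
      have hrm0 : 0 < r ^ m := Real.rpow_pos_of_pos hr' m
      have hrm : r ^ m ≤ H ^ (e*m) := by
        rw [Real.rpow_mul hH.le]
        exact Real.rpow_le_rpow hr hreg (by linarith)
      have hmin : H ^ e ≤ H ^ ((1:ℝ)/2) / r ^ m := by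
        have heq : H ^ e = H ^ ((1:ℝ)/2) / H ^ (e*m) := by
          rw [← Real.rpow_sub hH, show ((1:ℝ)/2 - e*m : ℝ) = e by rw [hedef]; field_simp; ring]
        rw [heq]
        gcongr
      rw [min_eq_left hmin]
      exact hA
    · -- regime B : H^e ≤ r ; small loop near radius r
      have hr' : 0 < r := lt_of_lt_of_le (Real.rpow_pos_of_pos hH e) hreg
      have hrm0 : 0 < r ^ m := Real.rpow_pos_of_pos hr' m
      set δ := H ^ ((1:ℝ)/2) / r ^ m with hδdef
      have hδ0 : 0 < δ := by rw [hδdef]; positivity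
      have hδr : δ ≤ r := by
        rw [hδdef, div_le_iff₀ hrm0]
        have h1 : H ^ ((1:ℝ)/2) ≤ r ^ (m+1) := by
          have h2 : (H ^ e) ^ (m+1) = H ^ (e*(m+1)) := (Real.rpow_mul hH0 e (m+1)).symm
          calc H ^ ((1:ℝ)/2) = (H ^ e) ^ (m+1) := by
                rw [h2, show (e*(m+1) : ℝ) = 1/2 by rw [hedef]; field_simp]
            _ ≤ r ^ (m+1) := Real.rpow_le_rpow (by positivity) hreg (by linarith)
        calc H ^ ((1:ℝ)/2) ≤ r ^ (m+1) := h1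
          _ = r * r ^ m := by
              rw [show (m+1 : ℝ) = 1 + m by ring, Real.rpow_add hr', Real.rpow_one]
      set ρ := r - δ with hρdef
      have hρ0 : 0 ≤ ρ := by rw [hρdef]; linarith
      have hρr : ρ ≤ r := by rw [hρdef]; linarith
      have hKr : Kp m r = r ^ (2*m+2) := Kp_rpow hr hm
      have hKρ : Kp m ρ = ρ ^ (2*m+2) := Kp_rpow hρ0 hm
      have hsplit_r : r ^ (2*m+2) = r * r ^ (2*m+1) := by
        rw [show (2*m+2 : ℝ) = 1 + (2*m+1) by ring, Real.rpow_add hr', Real.rpow_one]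
      have hsplit_ρ : ρ ^ (2*m+2) = ρ * ρ ^ (2*m+1) := by
        rw [show (2*m+2 : ℝ) = 1 + (2*m+1) by ring,
          Real.rpow_add' hρ0 (by intro h; nlinarith), Real.rpow_one]
      have hmono : ρ ^ (2*m+1) ≤ r ^ (2*m+1) := Real.rpow_le_rpow hρ0 hρr (by linarith)
      have hrp : 0 < r ^ (2*m+1) := Real.rpow_pos_of_pos hr' _
      have hD : δ * r ^ (2*m+1) ≤ Kp m r - Kp m ρ := by
        rw [hKr, hKρ, hsplit_r, hsplit_ρ]
        have h3 := mul_le_mul_of_nonneg_left hmono hρ0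
        have e1 : r * r^(2*m+1) - ρ * r^(2*m+1) = δ * r^(2*m+1) := by rw [hρdef]; ring
        linarith
      have hD0 : 0 < Kp m r - Kp m ρ := lt_of_lt_of_le (by positivity) hD
      set D := Kp m r - Kp m ρ with hDdef
      set θ := H / D with hθdef
      have hθ0 : 0 < θ := by rw [hθdef]; positivity
      have hθD : θ * (Kp m r - Kp m ρ) = H := by
        rw [hθdef, hDdef]
        exact div_mul_cancel₀ H (ne_of_gt hD0)
      set σ : ℝ := if 0 < τ - t0 then 1 else -1 with hσdef
      set a := σ * θ with hadef
      have hca : Real.cos (a + (-a)) = 1 := by simp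
      have hsa : Real.sin (a + (-a)) = 0 := by simp
      have hend : t0 - Kp m ρ * a - Kp m r * (-a) = τ := by
        rw [hadef, hσdef]
        split
        · rename_i hsign
          have hH' : H = τ - t0 := abs_of_pos hsign
          linear_combination hθD + hH'
        · rename_i hsign
          have hH' : H = -(τ - t0) := abs_of_nonpos (not_lt.mp hsign)
          linear_combination (-1:ℝ) * hθD - hH'
      have hkey := key_est (m := m) (u1 := u1) (u2 := u2) (r := r) (ρ := ρ) (a := a)
        (b := -a) (t0 := t0) hu hr hρ0 hca hsa
      rw [hend] at hkey
      have habsa : |a| = θ := by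
        rw [hadef, abs_mul, hσdef]
        split <;> simp [abs_of_pos hθ0]
      have hρδ : |ρ - r| = δ := by
        rw [hρdef, show r - δ - r = -δ by ring, abs_neg, abs_of_pos hδ0]
      have hδsq : δ^2 * r^(2*m) = H := by
        have h1 : (H ^ ((1:ℝ)/2))^2 = H := by
          rw [show ((H ^ ((1:ℝ)/2))^2 : ℝ) = (H ^ ((1:ℝ)/2)) ^ ((2:ℕ):ℝ)
              from (Real.rpow_natCast _ 2).symm, ← Real.rpow_mul hH0]
          norm_num
        have h2 : (r ^ m)^2 = r ^ (2*m) := by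
          rw [show ((r^m)^2 : ℝ) = (r^m) ^ ((2:ℕ):ℝ) from (Real.rpow_natCast _ 2).symm,
            ← Real.rpow_mul hr]
          norm_num [mul_comm]
        rw [hδdef, div_pow, h1, h2]
        field_simp
      have hsplit2 : r ^ (2*m+1) = r ^ (2*m) * r := by
        rw [Real.rpow_add hr', Real.rpow_one]
      have hrθ : r * θ ≤ δ := by
        have h3 : δ * (δ * r^(2*m+1)) = H * r := by
          rw [hsplit2]; linear_combination r * hδsq
        have h4 : δ * (δ * r^(2*m+1)) ≤ δ * D := mul_le_mul_of_nonneg_left hD hδ0.le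
        have h6 : r * θ * D = r * H := by
          rw [hθdef]
          field_simp
        refine le_of_mul_le_mul_right ?_ hD0
        linarith
      have hbound : 4 * (|ρ - r| + ρ * |a| + r * |(-a)|) ≤ 12 * δ := by
        rw [hρδ, abs_neg, habsa]
        have h5 : ρ * θ ≤ r * θ := mul_le_mul_of_nonneg_right hρr hθ0.le
        linarith
      have hB : ccDist m (r*u1, r*u2, t0) (r*u1, r*u2, τ) ≤ 12 * δ := le_trans hkey hbound
      have hb2b1 : δ ≤ H ^ e := by
        have h5 : H ^ (e*m) ≤ r ^ m := by
          rw [Real.rpow_mul hH0]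
          exact Real.rpow_le_rpow (by positivity) hreg (by linarith)
        have heq : H ^ e = H ^ ((1:ℝ)/2) / H ^ (e*m) := by
          rw [← Real.rpow_sub hH, show ((1:ℝ)/2 - e*m : ℝ) = e by rw [hedef]; field_simp; ring]
        rw [hδdef, heq]
        gcongr
      constructor
      · refine le_trans hB ?_
        have h8 : (12:ℝ) * δ ≤ 12 * H ^ e := by linarith
        have h9 : (12:ℝ) * H ^ e ≤ (4 + 8*Real.pi) * H ^ e :=
          mul_le_mul_of_nonneg_right (by linarith) (Real.rpow_pos_of_pos hH e).le
        linarith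
      · intro _
        rw [min_eq_right hb2b1]
        refine le_trans hB (mul_le_mul_of_nonneg_right (by linarith) hδ0.le)


/-- Estimate for the CC distance between points lying one above the other:
`d((z,t),(z,τ)) ≤ C min{ |τ−t|^(1/(2m+2)), |τ−t|^(1/2)/|z|^m }`
(the second term being `+∞` when `z = 0`). -/
theorem stmt4 (m : ℝ) (hm : 1 ≤ m) :
    ∃ C : ℝ, 0 < C ∧ ∀ x y t τ : ℝ,
      ccDist m (x, y, t) (x, y, τ) ≤ C * |τ - t| ^ (1 / (2 * m + 2)) ∧
      ((x, y) ≠ ((0 : ℝ), (0 : ℝ)) →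
        ccDist m (x, y, t) (x, y, τ) ≤
          C * min (|τ - t| ^ (1 / (2 * m + 2)))
            (|τ - t| ^ ((1 : ℝ) / 2) / nrm (x, y) ^ m)) := by
  refine ⟨4 + 8*Real.pi, by linarith [Real.pi_gt_three], ?_⟩
  intro x y t τ
  set r := nrm (x, y) with hrdef
  have hr0 : 0 ≤ r := Real.sqrt_nonneg _
  have hr2 : r^2 = x^2 + y^2 := Real.sq_sqrt (by positivity)
  obtain ⟨u1, u2, hu, hx, hy⟩ : ∃ u1 u2 : ℝ, u1^2 + u2^2 = 1 ∧ x = r*u1 ∧ y = r*u2 := by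
    rcases eq_or_lt_of_le hr0 with h0 | h0
    · have hxy : x^2 + y^2 = 0 := by rw [← hr2, ← h0]; ring
      have hx0 : x = 0 := by nlinarith
      have hy0 : y = 0 := by nlinarith
      exact ⟨1, 0, by norm_num, by rw [hx0, ← h0]; ring, by rw [hy0, ← h0]; ring⟩
    · refine ⟨x/r, y/r, ?_, by field_simp, by field_simp⟩
      field_simp
      linarith [hr2]
  have hh := main_est m hm u1 u2 r t τ hu hr0
  rw [hx, hy]
  constructor
  · exact hh.1
  · intro hne
    have hr' : 0 < r := by
      rcases eq_or_lt_of_le hr0 with h0 | h0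
      · exfalso
        apply hne
        rw [← h0]
        simp
      · exact h0
    exact hh.2 hr'
end
end

section
/- Let m ≥ 1 and d be the Carnot–Carathéodory distance of X = ∂_x + |z|^{2m} y ∂_t, Y = ∂_y − |z|^{2m} x ∂_t. There exists C₀ ≥ 1 such that for all (u,v) ∈ ℝ², all z ∈ ℝ² and t ∈ ℝ: |(u,v)| ≤ d( (z,t), e^{uX+vY}(z,t) ) ≤ C₀ |(u,v)|. -/
open MeasureTheory Set

noncomputable section

/-- The point `e^{uX+vY}(x,y,t)`. -/
noncomputable def flowPt (m u v x y t : ℝ) : ℝ × ℝ × ℝ :=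
  (x + u, y + v,
    t + (u * y - v * x) * ∫ s in (0 : ℝ)..1, w2m m (x + s * u, y + s * v))

lemma cs_pt (a b p q : ℝ) (hab : a^2+b^2 = 1) : a*p + b*q ≤ Real.sqrt (p^2+q^2) := by
  have h1 : (0:ℝ) ≤ p^2+q^2 := by positivity
  have h2 := Real.sq_sqrt h1
  have h3 := Real.sqrt_nonneg (p^2+q^2)
  nlinarith [sq_nonneg (a*q - b*p), sq_nonneg (Real.sqrt (p^2+q^2) - (a*p+b*q)),
    sq_nonneg (Real.sqrt (p^2+q^2) + (a*p+b*q))]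

lemma sqrtInt {α β : ℝ → ℝ} {T : ℝ} (hα : IntervalIntegrable α volume 0 T)
    (hβ : IntervalIntegrable β volume 0 T) :
    IntervalIntegrable (fun s => Real.sqrt (α s ^2 + β s ^2)) volume 0 T := by
  have hg : IntervalIntegrable (fun s => |α s| + |β s|) volume 0 T := hα.abs.add hβ.abs
  have hαm : AEStronglyMeasurable α (volume.restrict (Set.uIoc (0:ℝ) T)) :=
    hα.def'.aestronglyMeasurable
  have hβm : AEStronglyMeasurable β (volume.restrict (Set.uIoc (0:ℝ) T)) :=
    hβ.def'.aestronglyMeasurable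
  have hc : Continuous fun p : ℝ × ℝ => Real.sqrt (p.1^2 + p.2^2) :=
    Real.continuous_sqrt.comp ((continuous_fst.pow 2).add (continuous_snd.pow 2))
  have hm2 := hc.comp_aestronglyMeasurable (hαm.prodMk hβm)
  refine hg.mono_fun hm2 ?_
  refine Filter.Eventually.of_forall fun s => ?_
  have h1 : Real.sqrt (α s ^2 + β s ^2) ≤ |α s| + |β s| := by
    rw [show |α s| + |β s| = Real.sqrt ((|α s| + |β s|)^2) from
      (Real.sqrt_sq (by positivity)).symm]
    apply Real.sqrt_le_sqrt
    nlinarith [sq_abs (α s), sq_abs (β s),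
      mul_nonneg (abs_nonneg (α s)) (abs_nonneg (β s))]
  simpa [Real.norm_of_nonneg (Real.sqrt_nonneg (α s ^2 + β s ^2)),
    Real.norm_of_nonneg (show (0:ℝ) ≤ |α s| + |β s| by positivity)] using h1

/-- Global equivalence `|(u,v)| ≤ d((z,t), e^{uX+vY}(z,t)) ≤ C₀ |(u,v)|`. -/
theorem stmt9 (m : ℝ) (hm : 1 ≤ m) :
    ∃ C₀ : ℝ, 1 ≤ C₀ ∧ ∀ u v x y t : ℝ,
      Real.sqrt (u ^ 2 + v ^ 2) ≤ ccDist m (x, y, t) (flowPt m u v x y t) ∧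
      ccDist m (x, y, t) (flowPt m u v x y t) ≤ C₀ * Real.sqrt (u ^ 2 + v ^ 2) := by
  have hm0 : (0:ℝ) ≤ m := le_trans zero_le_one hm
  refine ⟨1, le_refl 1, fun u v x y t => ?_⟩
  set n : ℝ := Real.sqrt (u ^ 2 + v ^ 2) with hn
  set S : Set ℝ := { L : ℝ | ∃ T, 0 ≤ T ∧ ∃ γ α β, IsHorizontal m γ α β T ∧
    γ 0 = (x, y, t) ∧ γ T = flowPt m u v x y t ∧ L = ccLength α β T } with hS
  -- the candidate curve
  set g : ℝ → ℝ := fun s => w2m m (x + s*u, y + s*v) with hgdef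
  have hgc : Continuous g := by
    apply Continuous.rpow_const
    · exact ((continuous_const.add (continuous_id.mul continuous_const)).pow 2).add
        ((continuous_const.add (continuous_id.mul continuous_const)).pow 2)
    · exact fun _ => Or.inr hm0
  set γc : ℝ → ℝ × ℝ × ℝ :=
    fun s => (x + s*u, y + s*v, t + (u*y - v*x) * ∫ r in (0:ℝ)..s, g r) with hγc
  have hvf : ∀ s : ℝ, u • Xvf m (γc s) + v • Yvf m (γc s) = (u, v, (u*y - v*x) * g s) := by
    intro s
    simp only [hγc, Xvf, Yvf, hgdef, Prod.smul_mk, smul_eq_mul, Prod.mk_add_mk,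
      Prod.mk.injEq]
    refine ⟨by ring, by ring, by ring⟩
  have hderiv : ∀ s : ℝ, HasDerivAt γc (u, v, (u*y - v*x) * g s) s := by
    intro s
    have h1 : HasDerivAt (fun s : ℝ => x + s*u) u s := by
      simpa using ((hasDerivAt_id s).mul_const u).const_add x
    have h2 : HasDerivAt (fun s : ℝ => y + s*v) v s := by
      simpa using ((hasDerivAt_id s).mul_const v).const_add y
    have hJ : HasDerivAt (fun s : ℝ => ∫ r in (0:ℝ)..s, g r) (g s) s :=
      (hgc.integral_hasStrictDerivAt 0 s).hasDerivAt
    have h3 : HasDerivAt (fun s : ℝ => t + (u*y - v*x) * ∫ r in (0:ℝ)..s, g r)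
        ((u*y - v*x) * g s) s := (hJ.const_mul (u*y - v*x)).const_add t
    exact h1.prodMk (h2.prodMk h3)
  have hFc : Continuous fun s : ℝ => ((u:ℝ), (v:ℝ), (u*y - v*x) * g s) :=
    continuous_const.prodMk (continuous_const.prodMk (continuous_const.mul hgc))
  have hhor : IsHorizontal m γc (fun _ => u) (fun _ => v) 1 := by
    intro τ _
    have hint : IntervalIntegrable
        (fun s => (fun _ : ℝ => u) s • Xvf m (γc s) + (fun _ : ℝ => v) s • Yvf m (γc s))
        volume 0 τ := by
      have he : (fun s => (fun _ : ℝ => u) s • Xvf m (γc s) + (fun _ : ℝ => v) s • Yvf m (γc s))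
          = fun s => ((u:ℝ), (v:ℝ), (u*y - v*x) * g s) := funext fun s => hvf s
      rw [he]; exact hFc.intervalIntegrable 0 τ
    have hfund := intervalIntegral.integral_eq_sub_of_hasDerivAt
      (f := γc) (f' := fun s => (fun _ : ℝ => u) s • Xvf m (γc s) + (fun _ : ℝ => v) s • Yvf m (γc s))
      (fun s _ => by simpa only [hvf s] using hderiv s) hint
    rw [hfund]; abel
  have h0 : γc 0 = (x, y, t) := by simp [hγc]
  have h1 : γc 1 = flowPt m u v x y t := by
    simp only [hγc, flowPt, hgdef, one_mul]
  have hlen : ccLength (fun _ => u) (fun _ => v) 1 = n := by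
    simp [ccLength, hn]
  have hmem : n ∈ S := ⟨1, zero_le_one, γc, (fun _ => u), (fun _ => v), hhor, h0, h1, hlen.symm⟩
  have hbdd : ∀ L ∈ S, 0 ≤ L := by
    rintro L ⟨T, hT, γ, α, β, -, -, -, rfl⟩
    exact intervalIntegral.integral_nonneg hT fun s _ => Real.sqrt_nonneg _
  constructor
  · -- lower bound
    refine le_csInf ⟨n, hmem⟩ ?_
    rintro L ⟨T, hT, γ, α, β, hhorL, hγ0, hγT, rfl⟩
    have hLnn : 0 ≤ ccLength α β T :=
      intervalIntegral.integral_nonneg hT fun s _ => Real.sqrt_nonneg _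
    have hEq := hhorL T ⟨hT, le_refl T⟩
    set F : ℝ → ℝ × ℝ × ℝ := fun s => α s • Xvf m (γ s) + β s • Yvf m (γ s) with hF
    have hFfst : ∀ s, (F s).1 = α s := by
      intro s; simp [hF, Xvf, Yvf]
    have hFsnd : ∀ s, (F s).2.1 = β s := by
      intro s; simp [hF, Xvf, Yvf]
    by_cases hInt : IntervalIntegrable F volume 0 T
    · -- integrable case
      have hα : IntervalIntegrable α volume 0 T := by
        have h := (intervalIntegrable_iff.1 hInt)
        have h2 := (ContinuousLinearMap.fst ℝ ℝ (ℝ × ℝ)).integrable_comp h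
        refine intervalIntegrable_iff.2 ?_
        have : (fun s => (ContinuousLinearMap.fst ℝ ℝ (ℝ × ℝ)) (F s)) = α := by
          funext s; simpa using hFfst s
        rwa [this] at h2
      have hβ : IntervalIntegrable β volume 0 T := by
        have h := (intervalIntegrable_iff.1 hInt)
        have h2 := ((ContinuousLinearMap.fst ℝ ℝ ℝ).comp
          (ContinuousLinearMap.snd ℝ ℝ (ℝ × ℝ))).integrable_comp h
        refine intervalIntegrable_iff.2 ?_
        have : (fun s => ((ContinuousLinearMap.fst ℝ ℝ ℝ).comp
            (ContinuousLinearMap.snd ℝ ℝ (ℝ × ℝ))) (F s)) = β := by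
          funext s; simpa using hFsnd s
        rwa [this] at h2
      have hIfst : (∫ s in (0:ℝ)..T, F s).1 = u := by
        have h1 : (γ T).1 = (γ 0).1 + (∫ s in (0:ℝ)..T, F s).1 := by
          rw [hEq]; rfl
        rw [hγT, hγ0] at h1
        simp only [flowPt] at h1
        linarith
      have hIsnd : (∫ s in (0:ℝ)..T, F s).2.1 = v := by
        have h1 : (γ T).2.1 = (γ 0).2.1 + (∫ s in (0:ℝ)..T, F s).2.1 := by
          rw [hEq]; rfl
        rw [hγT, hγ0] at h1
        simp only [flowPt] at h1
        linarith
      have hu : ∫ s in (0:ℝ)..T, α s = u := by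
        have h := (ContinuousLinearMap.fst ℝ ℝ (ℝ × ℝ)).intervalIntegral_comp_comm hInt
        have he : (fun s => (ContinuousLinearMap.fst ℝ ℝ (ℝ × ℝ)) (F s)) = α := by
          funext s; simpa using hFfst s
        rw [he] at h
        rw [h]; exact hIfst
      have hv : ∫ s in (0:ℝ)..T, β s = v := by
        have h := ((ContinuousLinearMap.fst ℝ ℝ ℝ).comp
          (ContinuousLinearMap.snd ℝ ℝ (ℝ × ℝ))).intervalIntegral_comp_comm hInt
        have he : (fun s => ((ContinuousLinearMap.fst ℝ ℝ ℝ).comp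
            (ContinuousLinearMap.snd ℝ ℝ (ℝ × ℝ))) (F s)) = β := by
          funext s; simpa using hFsnd s
        rw [he] at h
        rw [h]; exact hIsnd
      by_cases hn0 : n = 0
      · rw [hn0]; exact hLnn
      · have hnpos : 0 < n := lt_of_le_of_ne (Real.sqrt_nonneg _) (Ne.symm hn0)
        have hn2 : n^2 = u^2 + v^2 := Real.sq_sqrt (by positivity)
        set a : ℝ := u / n with ha
        set b : ℝ := v / n with hb
        have hab : a^2 + b^2 = 1 := by
          rw [ha, hb, div_pow, div_pow, ← add_div, ← hn2]
          field_simp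
        have hint1 : IntervalIntegrable (fun s => a * α s + b * β s) volume 0 T :=
          (hα.const_mul a).add (hβ.const_mul b)
        have hint2 := sqrtInt hα hβ
        have hmono : (∫ s in (0:ℝ)..T, (a * α s + b * β s)) ≤ ccLength α β T :=
          intervalIntegral.integral_mono_on hT hint1 hint2 (fun s _ => cs_pt a b (α s) (β s) hab)
        have hval : (∫ s in (0:ℝ)..T, (a * α s + b * β s)) = n := by
          rw [intervalIntegral.integral_add (hα.const_mul a) (hβ.const_mul b),
            intervalIntegral.integral_const_mul, intervalIntegral.integral_const_mul, hu, hv,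
            ha, hb]
          field_simp
          nlinarith [hn2]
        linarith
    · -- non-integrable case
      have hz := intervalIntegral.integral_undef hInt
      rw [hz, add_zero] at hEq
      have hflow : flowPt m u v x y t = ((x:ℝ), (y:ℝ), (t:ℝ)) := hγT.symm.trans (hEq.trans hγ0)
      simp only [flowPt, Prod.mk.injEq] at hflow
      have hu0 : u = 0 := by linarith [hflow.1]
      have hv0 : v = 0 := by linarith [hflow.2.1]
      rw [hn, hu0, hv0]
      simpa using hLnn
  · rw [one_mul]
    exact csInf_le ⟨0, hbdd⟩ hmem
end
end
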